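/- arXiv:2306.17067 — 5 statements merged into one kernel-verified Lean document; each statement's English description precedes it below -/
import Mathlib

section
/- Let (X,Y), (X',Y'), (X'',Y'') be iid pairs of random vectors (X taking values in ℝ^N, Y in ℝ^M) with finite first moments, and assume all products of the form ‖X−X'‖‖Y−Y'‖, ‖X−X'‖‖Y−Y''‖, ‖X−X'‖‖X−X''‖, ‖Y−Y'‖‖Y−Y''‖, as well as ‖X−X'‖², ‖Y−Y'‖², are integrable. Then dCov²(X,Y) ≤ √(dCov²(X,X)) · √(dCov²(Y,Y)), where dCov²(X,X) and dCov²(Y,Y) are the squared distance variances of X and Y (which are nonnegative). Equivalently, dCov(X,Y) ≤ √(dVar(X)·dVar(Y)). -/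
open MeasureTheory ProbabilityTheory

set_option linter.unusedVariables false
set_option linter.unusedSectionVars false
set_option maxHeartbeats 1000000

section DCovAux
open Real


section L2Helpers

variable {α : Type*} [MeasurableSpace α] {μ : Measure α} {u v : α → ℝ}

private lemma innerToLp (hu : MemLp u 2 μ) (hv : MemLp v 2 μ) :
    (inner ℝ (hu.toLp u) (hv.toLp v) : ℝ) = ∫ x, u x * v x ∂μ := by
  rw [L2.inner_def]
  refine integral_congr_ae ?_
  filter_upwards [hu.coeFn_toLp, hv.coeFn_toLp] with x h1 h2
  rw [h1, h2]
  simp [RCLike.inner_apply, mul_comm]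

private lemma mulIntegrable (hu : MemLp u 2 μ) (hv : MemLp v 2 μ) :
    Integrable (fun x => u x * v x) μ := by
  have h := L2.integrable_inner (𝕜 := ℝ) (hu.toLp u) (hv.toLp v)
  refine (integrable_congr ?_).1 h
  filter_upwards [hu.coeFn_toLp, hv.coeFn_toLp] with x h1 h2
  rw [h1, h2]
  simp [RCLike.inner_apply, mul_comm]

private lemma integral_mul_le_sqrt (hu : MemLp u 2 μ) (hv : MemLp v 2 μ) :
    ∫ x, u x * v x ∂μ ≤ Real.sqrt (∫ x, u x ^ 2 ∂μ) * Real.sqrt (∫ x, v x ^ 2 ∂μ) := by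
  have h1 : (inner ℝ (hu.toLp u) (hv.toLp v) : ℝ) = ∫ x, u x * v x ∂μ := innerToLp hu hv
  have h2 : (inner ℝ (hu.toLp u) (hu.toLp u) : ℝ) = ∫ x, u x ^ 2 ∂μ := by
    rw [innerToLp hu hu]; simp_rw [← pow_two]
  have h3 : (inner ℝ (hv.toLp v) (hv.toLp v) : ℝ) = ∫ x, v x ^ 2 ∂μ := by
    rw [innerToLp hv hv]; simp_rw [← pow_two]
  have hnu : ‖hu.toLp u‖ = Real.sqrt (∫ x, u x ^ 2 ∂μ) := by
    rw [← h2, real_inner_self_eq_norm_mul_norm, Real.sqrt_mul_self (norm_nonneg _)]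
  have hnv : ‖hv.toLp v‖ = Real.sqrt (∫ x, v x ^ 2 ∂μ) := by
    rw [← h3, real_inner_self_eq_norm_mul_norm, Real.sqrt_mul_self (norm_nonneg _)]
  calc ∫ x, u x * v x ∂μ = inner ℝ (hu.toLp u) (hv.toLp v) := h1.symm
    _ ≤ ‖hu.toLp u‖ * ‖hv.toLp v‖ := real_inner_le_norm _ _
    _ = _ := by rw [hnu, hnv]

private lemma sq_integral_le [IsProbabilityMeasure μ] (hu : MemLp u 2 μ) :
    (∫ x, u x ∂μ) ^ 2 ≤ ∫ x, u x ^ 2 ∂μ := by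
  have h1 := integral_mul_le_sqrt hu (memLp_const (1 : ℝ))
  have h2 := integral_mul_le_sqrt hu.neg (memLp_const (1 : ℝ))
  simp only [mul_one, one_pow, integral_const, probReal_univ, measure_univ, ENNReal.toReal_one, smul_eq_mul,
    Real.sqrt_one, Pi.neg_apply, neg_sq, integral_neg] at h1 h2
  have habs : |∫ x, u x ∂μ| ≤ Real.sqrt (∫ x, u x ^ 2 ∂μ) := abs_le.2 ⟨by linarith, by linarith⟩
  calc (∫ x, u x ∂μ) ^ 2 = |∫ x, u x ∂μ| ^ 2 := (sq_abs _).symm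
    _ ≤ Real.sqrt (∫ x, u x ^ 2 ∂μ) ^ 2 := pow_le_pow_left₀ (abs_nonneg _) habs 2
    _ = ∫ x, u x ^ 2 ∂μ := Real.sq_sqrt (integral_nonneg fun x => sq_nonneg _)

end L2Helpers

section Kernel

variable {α : Type*} [MeasurableSpace α] {ρ : Measure α} [IsProbabilityMeasure ρ]
variable {d : α → α → ℝ}

private lemma memD (hm : Measurable (fun p : α × α => d p.1 p.2))
    (I : Integrable (fun p : α × α => d p.1 p.2 ^ 2) (ρ.prod ρ)) :
    MemLp (fun p : α × α => d p.1 p.2) 2 (ρ.prod ρ) :=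
  (memLp_two_iff_integrable_sq hm.aestronglyMeasurable).2 I

private lemma smF (hm : Measurable (fun p : α × α => d p.1 p.2)) :
    StronglyMeasurable (fun z => ∫ w, d z w ∂ρ) :=
  hm.stronglyMeasurable.integral_prod_right'

private lemma memF (hm : Measurable (fun p : α × α => d p.1 p.2))
    (I : Integrable (fun p : α × α => d p.1 p.2 ^ 2) (ρ.prod ρ)) :
    MemLp (fun z => ∫ w, d z w ∂ρ) 2 ρ := by
  have hsm := smF (ρ := ρ) hm
  refine (memLp_two_iff_integrable_sq hsm.aestronglyMeasurable).2 ?_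
  have hIl : Integrable (fun z => ∫ w, d z w ^ 2 ∂ρ) ρ := I.integral_prod_left
  refine hIl.mono' ((hsm.measurable.pow_const 2).aestronglyMeasurable) ?_
  have hae : ∀ᵐ z ∂ρ, Integrable (fun w => d z w ^ 2) ρ := I.prod_right_ae
  filter_upwards [hae] with z hz
  have hsl : AEStronglyMeasurable (fun w => d z w) ρ :=
    (hm.comp measurable_prodMk_left).aestronglyMeasurable
  have hj := sq_integral_le ((memLp_two_iff_integrable_sq hsl).2 hz)
  calc ‖(∫ w, d z w ∂ρ) ^ 2‖ = (∫ w, d z w ∂ρ) ^ 2 := by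
        rw [Real.norm_eq_abs, abs_of_nonneg (sq_nonneg _)]
    _ ≤ ∫ w, d z w ^ 2 ∂ρ := hj

private lemma intD (hm : Measurable (fun p : α × α => d p.1 p.2))
    (I : Integrable (fun p : α × α => d p.1 p.2 ^ 2) (ρ.prod ρ)) :
    Integrable (fun p : α × α => d p.1 p.2) (ρ.prod ρ) :=
  (memD hm I).integrable one_le_two

private lemma intF_eq (hm : Measurable (fun p : α × α => d p.1 p.2))
    (I : Integrable (fun p : α × α => d p.1 p.2 ^ 2) (ρ.prod ρ)) :
    ∫ z, (∫ w, d z w ∂ρ) ∂ρ = ∫ p : α × α, d p.1 p.2 ∂(ρ.prod ρ) :=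
  (integral_prod _ (intD hm I)).symm

private lemma mpFst : MeasurePreserving (Prod.fst : α × α → α) (ρ.prod ρ) ρ :=
  ⟨measurable_fst, by simp⟩

private lemma mpSnd : MeasurePreserving (Prod.snd : α × α → α) (ρ.prod ρ) ρ :=
  ⟨measurable_snd, by simp⟩

private lemma memF_fst (hm : Measurable (fun p : α × α => d p.1 p.2))
    (I : Integrable (fun p : α × α => d p.1 p.2 ^ 2) (ρ.prod ρ)) :
    MemLp (fun p : α × α => ∫ w, d p.1 w ∂ρ) 2 (ρ.prod ρ) :=
  (memF hm I).comp_measurePreserving mpFst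

private lemma memF_snd (hm : Measurable (fun p : α × α => d p.1 p.2))
    (I : Integrable (fun p : α × α => d p.1 p.2 ^ 2) (ρ.prod ρ)) :
    MemLp (fun p : α × α => ∫ w, d p.2 w ∂ρ) 2 (ρ.prod ρ) :=
  (memF hm I).comp_measurePreserving mpSnd

-- elementary product-integral evaluations
private lemma ev_fst_mul_snd (u v : α → ℝ) :
    ∫ p : α × α, u p.1 * v p.2 ∂(ρ.prod ρ) = (∫ z, u z ∂ρ) * ∫ z, v z ∂ρ :=
  integral_prod_mul u v

private lemma ev_fst_mul_fst (u v : α → ℝ) :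
    ∫ p : α × α, u p.1 * v p.1 ∂(ρ.prod ρ) = ∫ z, u z * v z ∂ρ := by
  have h := integral_prod_mul (μ := ρ) (ν := ρ) (fun z => u z * v z) (fun _ => (1 : ℝ))
  simpa using h

private lemma ev_snd_mul_snd (u v : α → ℝ) :
    ∫ p : α × α, u p.2 * v p.2 ∂(ρ.prod ρ) = ∫ z, u z * v z ∂ρ := by
  have h := integral_prod_mul (μ := ρ) (ν := ρ) (fun _ => (1 : ℝ)) (fun z => u z * v z)
  simpa using h

private lemma ev_snd_mul_fst (u v : α → ℝ) :
    ∫ p : α × α, u p.2 * v p.1 ∂(ρ.prod ρ) = (∫ z, u z ∂ρ) * ∫ z, v z ∂ρ := by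
  have e : (fun p : α × α => u p.2 * v p.1) = fun p : α × α => v p.1 * u p.2 :=
    funext fun p => mul_comm _ _
  rw [e, integral_prod_mul, mul_comm]

private lemma ev_fst (u : α → ℝ) :
    ∫ p : α × α, u p.1 ∂(ρ.prod ρ) = ∫ z, u z ∂ρ := by
  have h := integral_prod_mul (μ := ρ) (ν := ρ) u (fun _ => (1 : ℝ))
  simpa using h

private lemma ev_snd (u : α → ℝ) :
    ∫ p : α × α, u p.2 ∂(ρ.prod ρ) = ∫ z, u z ∂ρ := by
  have h := integral_prod_mul (μ := ρ) (ν := ρ) (fun _ => (1 : ℝ)) u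
  simpa using h

private lemma ev_D_mul_fst (v : α → ℝ)
    (hI : Integrable (fun p : α × α => d p.1 p.2 * v p.1) (ρ.prod ρ)) :
    ∫ p : α × α, d p.1 p.2 * v p.1 ∂(ρ.prod ρ) = ∫ z, (∫ w, d z w ∂ρ) * v z ∂ρ := by
  rw [integral_prod _ hI]
  refine integral_congr_ae (Filter.Eventually.of_forall fun z => ?_)
  show ∫ w, d z w * v z ∂ρ = _
  exact integral_mul_const (v z) fun w => d z w

private lemma ev_fst_mul_D (v : α → ℝ)
    (hI : Integrable (fun p : α × α => v p.1 * d p.1 p.2) (ρ.prod ρ)) :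
    ∫ p : α × α, v p.1 * d p.1 p.2 ∂(ρ.prod ρ) = ∫ z, v z * (∫ w, d z w ∂ρ) ∂ρ := by
  rw [integral_prod _ hI]
  refine integral_congr_ae (Filter.Eventually.of_forall fun z => ?_)
  show ∫ w, v z * d z w ∂ρ = _
  exact integral_const_mul (v z) fun w => d z w

private lemma ev_D_mul_snd (hs : ∀ z w, d z w = d w z) (v : α → ℝ)
    (hI : Integrable (fun p : α × α => d p.1 p.2 * v p.2) (ρ.prod ρ)) :
    ∫ p : α × α, d p.1 p.2 * v p.2 ∂(ρ.prod ρ) = ∫ z, (∫ w, d z w ∂ρ) * v z ∂ρ := by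
  rw [integral_prod_symm _ hI]
  refine integral_congr_ae (Filter.Eventually.of_forall fun y => ?_)
  show ∫ x, d x y * v y ∂ρ = _
  rw [integral_mul_const]
  congr 1
  refine integral_congr_ae (Filter.Eventually.of_forall fun x => ?_)
  exact hs x y

private lemma ev_snd_mul_D (hs : ∀ z w, d z w = d w z) (v : α → ℝ)
    (hI : Integrable (fun p : α × α => v p.2 * d p.1 p.2) (ρ.prod ρ)) :
    ∫ p : α × α, v p.2 * d p.1 p.2 ∂(ρ.prod ρ) = ∫ z, v z * (∫ w, d z w ∂ρ) ∂ρ := by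
  rw [integral_prod_symm _ hI]
  refine integral_congr_ae (Filter.Eventually.of_forall fun y => ?_)
  show ∫ x, v y * d x y ∂ρ = _
  rw [integral_const_mul]
  congr 1
  refine integral_congr_ae (Filter.Eventually.of_forall fun x => ?_)
  exact hs x y

end Kernel

section Pair

variable {α : Type*} [MeasurableSpace α] {ρ : Measure α} [IsProbabilityMeasure ρ]
variable {da db : α → α → ℝ} {fa fb : α → ℝ} {ma mb : ℝ}

private lemma pair_eval
    (hma : Measurable (fun p : α × α => da p.1 p.2))
    (hmb : Measurable (fun p : α × α => db p.1 p.2))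
    (hsa : ∀ z w, da z w = da w z) (hsb : ∀ z w, db z w = db w z)
    (Ia : Integrable (fun p : α × α => da p.1 p.2 ^ 2) (ρ.prod ρ))
    (Ib : Integrable (fun p : α × α => db p.1 p.2 ^ 2) (ρ.prod ρ))
    (hfa : ∀ z, fa z = ∫ w, da z w ∂ρ) (hfb : ∀ z, fb z = ∫ w, db z w ∂ρ)
    (hmadef : ma = ∫ p : α × α, da p.1 p.2 ∂(ρ.prod ρ))
    (hmbdef : mb = ∫ p : α × α, db p.1 p.2 ∂(ρ.prod ρ)) :
    ∫ p : α × α, (da p.1 p.2 - fa p.1 - fa p.2 + ma) * (db p.1 p.2 - fb p.1 - fb p.2 + mb)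
        ∂(ρ.prod ρ)
      = (∫ p : α × α, da p.1 p.2 * db p.1 p.2 ∂(ρ.prod ρ)) + ma * mb
        - 2 * ∫ z, fa z * fb z ∂ρ := by
  have hfa' : fa = fun z => ∫ w, da z w ∂ρ := funext hfa
  have hfb' : fb = fun z => ∫ w, db z w ∂ρ := funext hfb
  -- MemLp facts
  have MDa : MemLp (fun p : α × α => da p.1 p.2) 2 (ρ.prod ρ) := memD hma Ia
  have MDb : MemLp (fun p : α × α => db p.1 p.2) 2 (ρ.prod ρ) := memD hmb Ib
  have Mfa : MemLp fa 2 ρ := by rw [hfa']; exact memF hma Ia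
  have Mfb : MemLp fb 2 ρ := by rw [hfb']; exact memF hmb Ib
  have MFa1 : MemLp (fun p : α × α => fa p.1) 2 (ρ.prod ρ) := by
    have h : (fun p : α × α => fa p.1) = fun p : α × α => ∫ w, da p.1 w ∂ρ :=
      funext fun p => hfa p.1
    rw [h]; exact memF_fst hma Ia
  have MFa2 : MemLp (fun p : α × α => fa p.2) 2 (ρ.prod ρ) := by
    have h : (fun p : α × α => fa p.2) = fun p : α × α => ∫ w, da p.2 w ∂ρ :=
      funext fun p => hfa p.2
    rw [h]; exact memF_snd hma Ia
  have MFb1 : MemLp (fun p : α × α => fb p.1) 2 (ρ.prod ρ) := by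
    have h : (fun p : α × α => fb p.1) = fun p : α × α => ∫ w, db p.1 w ∂ρ :=
      funext fun p => hfb p.1
    rw [h]; exact memF_fst hmb Ib
  have MFb2 : MemLp (fun p : α × α => fb p.2) 2 (ρ.prod ρ) := by
    have h : (fun p : α × α => fb p.2) = fun p : α × α => ∫ w, db p.2 w ∂ρ :=
      funext fun p => hfb p.2
    rw [h]; exact memF_snd hmb Ib
  -- integrals of fa, fb
  have hinta : ∫ z, fa z ∂ρ = ma := by
    rw [hfa', hmadef]; exact intF_eq hma Ia
  have hintb : ∫ z, fb z ∂ρ = mb := by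
    rw [hfb', hmbdef]; exact intF_eq hmb Ib
  -- 16 integrability facts
  have i11 : Integrable (fun p : α × α => da p.1 p.2 * db p.1 p.2) (ρ.prod ρ) :=
    mulIntegrable MDa MDb
  have i12 : Integrable (fun p : α × α => fa p.1 * db p.1 p.2) (ρ.prod ρ) :=
    mulIntegrable MFa1 MDb
  have i13 : Integrable (fun p : α × α => fa p.2 * db p.1 p.2) (ρ.prod ρ) :=
    mulIntegrable MFa2 MDb
  have i14 : Integrable (fun p : α × α => ma * db p.1 p.2) (ρ.prod ρ) :=
    (intD hmb Ib).const_mul ma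
  have i21 : Integrable (fun p : α × α => da p.1 p.2 * fb p.1) (ρ.prod ρ) :=
    mulIntegrable MDa MFb1
  have i22 : Integrable (fun p : α × α => fa p.1 * fb p.1) (ρ.prod ρ) :=
    mulIntegrable MFa1 MFb1
  have i23 : Integrable (fun p : α × α => fa p.2 * fb p.1) (ρ.prod ρ) :=
    mulIntegrable MFa2 MFb1
  have i24 : Integrable (fun p : α × α => ma * fb p.1) (ρ.prod ρ) :=
    (MFb1.integrable one_le_two).const_mul ma
  have i31 : Integrable (fun p : α × α => da p.1 p.2 * fb p.2) (ρ.prod ρ) :=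
    mulIntegrable MDa MFb2
  have i32 : Integrable (fun p : α × α => fa p.1 * fb p.2) (ρ.prod ρ) :=
    mulIntegrable MFa1 MFb2
  have i33 : Integrable (fun p : α × α => fa p.2 * fb p.2) (ρ.prod ρ) :=
    mulIntegrable MFa2 MFb2
  have i34 : Integrable (fun p : α × α => ma * fb p.2) (ρ.prod ρ) :=
    (MFb2.integrable one_le_two).const_mul ma
  have i41 : Integrable (fun p : α × α => da p.1 p.2 * mb) (ρ.prod ρ) :=
    (intD hma Ia).mul_const mb
  have i42 : Integrable (fun p : α × α => fa p.1 * mb) (ρ.prod ρ) :=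
    (MFa1.integrable one_le_two).mul_const mb
  have i43 : Integrable (fun p : α × α => fa p.2 * mb) (ρ.prod ρ) :=
    (MFa2.integrable one_le_two).mul_const mb
  have i44 : Integrable (fun p : α × α => ma * mb) (ρ.prod ρ) := integrable_const _
  -- group integrability
  have g1 : Integrable (fun p : α × α =>
      da p.1 p.2 * db p.1 p.2 - fa p.1 * db p.1 p.2 - fa p.2 * db p.1 p.2 + ma * db p.1 p.2)
      (ρ.prod ρ) := ((i11.sub i12).sub i13).add i14
  have g2 : Integrable (fun p : α × α =>
      da p.1 p.2 * fb p.1 - fa p.1 * fb p.1 - fa p.2 * fb p.1 + ma * fb p.1)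
      (ρ.prod ρ) := ((i21.sub i22).sub i23).add i24
  have g3 : Integrable (fun p : α × α =>
      da p.1 p.2 * fb p.2 - fa p.1 * fb p.2 - fa p.2 * fb p.2 + ma * fb p.2)
      (ρ.prod ρ) := ((i31.sub i32).sub i33).add i34
  have g4 : Integrable (fun p : α × α =>
      da p.1 p.2 * mb - fa p.1 * mb - fa p.2 * mb + ma * mb)
      (ρ.prod ρ) := ((i41.sub i42).sub i43).add i44
  have g12 : Integrable (fun p : α × α =>
      (da p.1 p.2 * db p.1 p.2 - fa p.1 * db p.1 p.2 - fa p.2 * db p.1 p.2 + ma * db p.1 p.2)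
      - (da p.1 p.2 * fb p.1 - fa p.1 * fb p.1 - fa p.2 * fb p.1 + ma * fb p.1))
      (ρ.prod ρ) := g1.sub g2
  have g123 : Integrable (fun p : α × α =>
      (da p.1 p.2 * db p.1 p.2 - fa p.1 * db p.1 p.2 - fa p.2 * db p.1 p.2 + ma * db p.1 p.2)
      - (da p.1 p.2 * fb p.1 - fa p.1 * fb p.1 - fa p.2 * fb p.1 + ma * fb p.1)
      - (da p.1 p.2 * fb p.2 - fa p.1 * fb p.2 - fa p.2 * fb p.2 + ma * fb p.2))
      (ρ.prod ρ) := g12.sub g3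
  -- expand the integrand
  have expand : (fun p : α × α =>
      (da p.1 p.2 - fa p.1 - fa p.2 + ma) * (db p.1 p.2 - fb p.1 - fb p.2 + mb))
      = (fun p : α × α =>
      (da p.1 p.2 * db p.1 p.2 - fa p.1 * db p.1 p.2 - fa p.2 * db p.1 p.2 + ma * db p.1 p.2)
      - (da p.1 p.2 * fb p.1 - fa p.1 * fb p.1 - fa p.2 * fb p.1 + ma * fb p.1)
      - (da p.1 p.2 * fb p.2 - fa p.1 * fb p.2 - fa p.2 * fb p.2 + ma * fb p.2)
      + (da p.1 p.2 * mb - fa p.1 * mb - fa p.2 * mb + ma * mb)) :=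
    funext fun p => by ring
  have p1a : Integrable (fun p : α × α =>
      da p.1 p.2 * db p.1 p.2 - fa p.1 * db p.1 p.2) (ρ.prod ρ) := i11.sub i12
  have p1b : Integrable (fun p : α × α =>
      da p.1 p.2 * db p.1 p.2 - fa p.1 * db p.1 p.2 - fa p.2 * db p.1 p.2) (ρ.prod ρ) :=
    p1a.sub i13
  have p2a : Integrable (fun p : α × α =>
      da p.1 p.2 * fb p.1 - fa p.1 * fb p.1) (ρ.prod ρ) := i21.sub i22
  have p2b : Integrable (fun p : α × α =>
      da p.1 p.2 * fb p.1 - fa p.1 * fb p.1 - fa p.2 * fb p.1) (ρ.prod ρ) := p2a.sub i23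
  have p3a : Integrable (fun p : α × α =>
      da p.1 p.2 * fb p.2 - fa p.1 * fb p.2) (ρ.prod ρ) := i31.sub i32
  have p3b : Integrable (fun p : α × α =>
      da p.1 p.2 * fb p.2 - fa p.1 * fb p.2 - fa p.2 * fb p.2) (ρ.prod ρ) := p3a.sub i33
  have p4a : Integrable (fun p : α × α =>
      da p.1 p.2 * mb - fa p.1 * mb) (ρ.prod ρ) := i41.sub i42
  have p4b : Integrable (fun p : α × α =>
      da p.1 p.2 * mb - fa p.1 * mb - fa p.2 * mb) (ρ.prod ρ) := p4a.sub i43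
  rw [expand, integral_add g123 g4, integral_sub g12 g3, integral_sub g1 g2,
    integral_add p1b i14, integral_sub p1a i13, integral_sub i11 i12,
    integral_add p2b i24, integral_sub p2a i23, integral_sub i21 i22,
    integral_add p3b i34, integral_sub p3a i33, integral_sub i31 i32,
    integral_add p4b i44, integral_sub p4a i43, integral_sub i41 i42]
  -- now evaluate each elementary integral
  have vS1 : ∫ p : α × α, da p.1 p.2 * fb p.1 ∂(ρ.prod ρ) = ∫ z, fa z * fb z ∂ρ := by
    rw [ev_D_mul_fst fb i21]
    refine integral_congr_ae (Filter.Eventually.of_forall fun z => ?_)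
    exact congrArg (fun t => t * fb z) (hfa z).symm
  have vS2 : ∫ p : α × α, da p.1 p.2 * fb p.2 ∂(ρ.prod ρ) = ∫ z, fa z * fb z ∂ρ := by
    rw [ev_D_mul_snd hsa fb i31]
    refine integral_congr_ae (Filter.Eventually.of_forall fun z => ?_)
    exact congrArg (fun t => t * fb z) (hfa z).symm
  have vS3 : ∫ p : α × α, fa p.1 * db p.1 p.2 ∂(ρ.prod ρ) = ∫ z, fa z * fb z ∂ρ := by
    rw [ev_fst_mul_D fa i12]
    refine integral_congr_ae (Filter.Eventually.of_forall fun z => ?_)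
    exact congrArg (fun t => fa z * t) (hfb z).symm
  have vS4 : ∫ p : α × α, fa p.2 * db p.1 p.2 ∂(ρ.prod ρ) = ∫ z, fa z * fb z ∂ρ := by
    rw [ev_snd_mul_D hsb fa i13]
    refine integral_congr_ae (Filter.Eventually.of_forall fun z => ?_)
    exact congrArg (fun t => fa z * t) (hfb z).symm
  have vS5 : ∫ p : α × α, fa p.1 * fb p.1 ∂(ρ.prod ρ) = ∫ z, fa z * fb z ∂ρ :=
    ev_fst_mul_fst fa fb
  have vS6 : ∫ p : α × α, fa p.2 * fb p.2 ∂(ρ.prod ρ) = ∫ z, fa z * fb z ∂ρ :=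
    ev_snd_mul_snd fa fb
  have vM1 : ∫ p : α × α, fa p.1 * fb p.2 ∂(ρ.prod ρ) = ma * mb := by
    rw [ev_fst_mul_snd fa fb, hinta, hintb]
  have vM2 : ∫ p : α × α, fa p.2 * fb p.1 ∂(ρ.prod ρ) = ma * mb := by
    rw [ev_snd_mul_fst fa fb, hinta, hintb]
  have vca : ∫ p : α × α, da p.1 p.2 ∂(ρ.prod ρ) = ma := hmadef.symm
  have vcb : ∫ p : α × α, db p.1 p.2 ∂(ρ.prod ρ) = mb := hmbdef.symm
  have vfa1 : ∫ p : α × α, fa p.1 ∂(ρ.prod ρ) = ma := by rw [ev_fst fa, hinta]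
  have vfa2 : ∫ p : α × α, fa p.2 ∂(ρ.prod ρ) = ma := by rw [ev_snd fa, hinta]
  have vfb1 : ∫ p : α × α, fb p.1 ∂(ρ.prod ρ) = mb := by rw [ev_fst fb, hintb]
  have vfb2 : ∫ p : α × α, fb p.2 ∂(ρ.prod ρ) = mb := by rw [ev_snd fb, hintb]
  -- constant-involving integrals
  have vc1 : ∫ p : α × α, ma * db p.1 p.2 ∂(ρ.prod ρ) = ma * mb := by
    rw [integral_const_mul, vcb]
  have vc2 : ∫ p : α × α, ma * fb p.1 ∂(ρ.prod ρ) = ma * mb := by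
    rw [integral_const_mul, vfb1]
  have vc3 : ∫ p : α × α, ma * fb p.2 ∂(ρ.prod ρ) = ma * mb := by
    rw [integral_const_mul, vfb2]
  have vc4 : ∫ p : α × α, da p.1 p.2 * mb ∂(ρ.prod ρ) = ma * mb := by
    rw [integral_mul_const, vca]
  have vc5 : ∫ p : α × α, fa p.1 * mb ∂(ρ.prod ρ) = ma * mb := by
    rw [integral_mul_const, vfa1]
  have vc6 : ∫ p : α × α, fa p.2 * mb ∂(ρ.prod ρ) = ma * mb := by
    rw [integral_mul_const, vfa2]
  have vc7 : ∫ _p : α × α, ma * mb ∂(ρ.prod ρ) = ma * mb := by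
    simp
  rw [vS1, vS2, vS3, vS4, vS5, vS6, vM1, vM2, vc1, vc2, vc3, vc4, vc5, vc6, vc7]
  ring

end Pair

section Key

variable {α : Type*} [MeasurableSpace α] {ρ : Measure α} [IsProbabilityMeasure ρ]

private lemma key_ineq (da db : α → α → ℝ)
    (hma : Measurable (fun p : α × α => da p.1 p.2))
    (hmb : Measurable (fun p : α × α => db p.1 p.2))
    (hsa : ∀ z w, da z w = da w z) (hsb : ∀ z w, db z w = db w z)
    (Ia : Integrable (fun p : α × α => da p.1 p.2 ^ 2) (ρ.prod ρ))
    (Ib : Integrable (fun p : α × α => db p.1 p.2 ^ 2) (ρ.prod ρ)) :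
    (∫ p : α × α, da p.1 p.2 * db p.1 p.2 ∂(ρ.prod ρ))
      + (∫ p : α × α, da p.1 p.2 ∂(ρ.prod ρ)) * (∫ p : α × α, db p.1 p.2 ∂(ρ.prod ρ))
      - 2 * ∫ z, (∫ w, da z w ∂ρ) * (∫ w, db z w ∂ρ) ∂ρ
    ≤ Real.sqrt ((∫ p : α × α, da p.1 p.2 ^ 2 ∂(ρ.prod ρ))
        + (∫ p : α × α, da p.1 p.2 ∂(ρ.prod ρ)) ^ 2
        - 2 * ∫ z, (∫ w, da z w ∂ρ) ^ 2 ∂ρ)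
      * Real.sqrt ((∫ p : α × α, db p.1 p.2 ^ 2 ∂(ρ.prod ρ))
        + (∫ p : α × α, db p.1 p.2 ∂(ρ.prod ρ)) ^ 2
        - 2 * ∫ z, (∫ w, db z w ∂ρ) ^ 2 ∂ρ) := by
  set fa : α → ℝ := fun z => ∫ w, da z w ∂ρ with hfa'
  set fb : α → ℝ := fun z => ∫ w, db z w ∂ρ with hfb'
  set ma : ℝ := ∫ p : α × α, da p.1 p.2 ∂(ρ.prod ρ) with hma'
  set mb : ℝ := ∫ p : α × α, db p.1 p.2 ∂(ρ.prod ρ) with hmb'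
  have hfa : ∀ z, fa z = ∫ w, da z w ∂ρ := fun z => rfl
  have hfb : ∀ z, fb z = ∫ w, db z w ∂ρ := fun z => rfl
  -- MemLp of the centered kernels
  have MFa1 : MemLp (fun p : α × α => fa p.1) 2 (ρ.prod ρ) := memF_fst hma Ia
  have MFa2 : MemLp (fun p : α × α => fa p.2) 2 (ρ.prod ρ) := memF_snd hma Ia
  have MFb1 : MemLp (fun p : α × α => fb p.1) 2 (ρ.prod ρ) := memF_fst hmb Ib
  have MFb2 : MemLp (fun p : α × α => fb p.2) 2 (ρ.prod ρ) := memF_snd hmb Ib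
  have MAa : MemLp (fun p : α × α => da p.1 p.2 - fa p.1 - fa p.2 + ma) 2 (ρ.prod ρ) :=
    (((memD hma Ia).sub MFa1).sub MFa2).add (memLp_const ma)
  have MAb : MemLp (fun p : α × α => db p.1 p.2 - fb p.1 - fb p.2 + mb) 2 (ρ.prod ρ) :=
    (((memD hmb Ib).sub MFb1).sub MFb2).add (memLp_const mb)
  have hCS := integral_mul_le_sqrt MAa MAb
  have hAB := pair_eval hma hmb hsa hsb Ia Ib hfa hfb hma' hmb'
  have hAA := pair_eval hma hma hsa hsa Ia Ia hfa hfa hma' hma'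
  have hBB := pair_eval hmb hmb hsb hsb Ib Ib hfb hfb hmb' hmb'
  -- convert squares to products
  have sq1 : (fun p : α × α => (da p.1 p.2 - fa p.1 - fa p.2 + ma) ^ 2)
      = fun p : α × α => (da p.1 p.2 - fa p.1 - fa p.2 + ma)
        * (da p.1 p.2 - fa p.1 - fa p.2 + ma) := funext fun p => by ring
  have sq2 : (fun p : α × α => (db p.1 p.2 - fb p.1 - fb p.2 + mb) ^ 2)
      = fun p : α × α => (db p.1 p.2 - fb p.1 - fb p.2 + mb)
        * (db p.1 p.2 - fb p.1 - fb p.2 + mb) := funext fun p => by ring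
  rw [sq1, sq2, hAB, hAA, hBB] at hCS
  have eda : ∫ p : α × α, da p.1 p.2 * da p.1 p.2 ∂(ρ.prod ρ)
      = ∫ p : α × α, da p.1 p.2 ^ 2 ∂(ρ.prod ρ) := by
    refine integral_congr_ae (Filter.Eventually.of_forall fun p => ?_)
    exact (pow_two _).symm
  have edb : ∫ p : α × α, db p.1 p.2 * db p.1 p.2 ∂(ρ.prod ρ)
      = ∫ p : α × α, db p.1 p.2 ^ 2 ∂(ρ.prod ρ) := by
    refine integral_congr_ae (Filter.Eventually.of_forall fun p => ?_)
    exact (pow_two _).symm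
  have efa : ∫ z, fa z * fa z ∂ρ = ∫ z, fa z ^ 2 ∂ρ := by
    refine integral_congr_ae (Filter.Eventually.of_forall fun z => ?_)
    exact (pow_two _).symm
  have efb : ∫ z, fb z * fb z ∂ρ = ∫ z, fb z ^ 2 ∂ρ := by
    refine integral_congr_ae (Filter.Eventually.of_forall fun z => ?_)
    exact (pow_two _).symm
  rw [eda, edb, efa, efb] at hCS
  calc (∫ p : α × α, da p.1 p.2 * db p.1 p.2 ∂(ρ.prod ρ)) + ma * mb
        - 2 * ∫ z, fa z * fb z ∂ρ
      ≤ Real.sqrt ((∫ p : α × α, da p.1 p.2 ^ 2 ∂(ρ.prod ρ)) + ma * ma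
          - 2 * ∫ z, fa z ^ 2 ∂ρ)
        * Real.sqrt ((∫ p : α × α, db p.1 p.2 ^ 2 ∂(ρ.prod ρ)) + mb * mb
          - 2 * ∫ z, fb z ^ 2 ∂ρ) := hCS
    _ = _ := by rw [← pow_two ma, ← pow_two mb]

end Key

end DCovAux

/-- Cauchy–Schwarz-type inequality for distance covariance:
`dCov²(X,Y) ≤ √(dCov²(X,X)) · √(dCov²(Y,Y))` for iid pairs
`(X,Y)`, `(X',Y')`, `(X'',Y'')`, where
`dCov²(X,Y) = E[‖X−X'‖‖Y−Y'‖] + E[‖X−X'‖]E[‖Y−Y'‖] − E[‖X−X'‖‖Y−Y''‖] − E[‖X−X''‖‖Y−Y'‖]`,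
`dCov²(X,X) = E[‖X−X'‖²] + (E[‖X−X'‖])² − 2E[‖X−X'‖‖X−X''‖]`, and similarly for `Y`. -/
theorem dCov_sq_le_sqrt_dVar_sq_mul_sqrt_dVar_sq
    {Ω : Type*} [MeasurableSpace Ω] (μ : Measure Ω) [IsProbabilityMeasure μ]
    (N M : ℕ)
    (X X' X'' : Ω → EuclideanSpace ℝ (Fin N))
    (Y Y' Y'' : Ω → EuclideanSpace ℝ (Fin M))
    (hXm : Measurable X) (hX'm : Measurable X') (hX''m : Measurable X'')
    (hYm : Measurable Y) (hY'm : Measurable Y') (hY''m : Measurable Y'')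
    (hindep : iIndepFun
      ![fun ω => (X ω, Y ω), fun ω => (X' ω, Y' ω), fun ω => (X'' ω, Y'' ω)] μ)
    (hid1 : IdentDistrib (fun ω => (X ω, Y ω)) (fun ω => (X' ω, Y' ω)) μ μ)
    (hid2 : IdentDistrib (fun ω => (X ω, Y ω)) (fun ω => (X'' ω, Y'' ω)) μ μ)
    (hXi : Integrable X μ) (hX'i : Integrable X' μ) (hX''i : Integrable X'' μ)
    (hYi : Integrable Y μ) (hY'i : Integrable Y' μ) (hY''i : Integrable Y'' μ)
    (h1 : Integrable (fun ω => ‖X ω - X' ω‖ * ‖Y ω - Y' ω‖) μ)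
    (h2 : Integrable (fun ω => ‖X ω - X' ω‖ * ‖Y ω - Y'' ω‖) μ)
    (h3 : Integrable (fun ω => ‖X ω - X'' ω‖ * ‖Y ω - Y' ω‖) μ)
    (h4 : Integrable (fun ω => ‖X ω - X' ω‖ * ‖X ω - X'' ω‖) μ)
    (h5 : Integrable (fun ω => ‖Y ω - Y' ω‖ * ‖Y ω - Y'' ω‖) μ)
    (h6 : Integrable (fun ω => ‖X ω - X' ω‖ ^ 2) μ)
    (h7 : Integrable (fun ω => ‖Y ω - Y' ω‖ ^ 2) μ) :
    (∫ ω, ‖X ω - X' ω‖ * ‖Y ω - Y' ω‖ ∂μ)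
        + (∫ ω, ‖X ω - X' ω‖ ∂μ) * (∫ ω, ‖Y ω - Y' ω‖ ∂μ)
        - (∫ ω, ‖X ω - X' ω‖ * ‖Y ω - Y'' ω‖ ∂μ)
        - (∫ ω, ‖X ω - X'' ω‖ * ‖Y ω - Y' ω‖ ∂μ)
      ≤ Real.sqrt ((∫ ω, ‖X ω - X' ω‖ ^ 2 ∂μ)
            + (∫ ω, ‖X ω - X' ω‖ ∂μ) ^ 2
            - 2 * ∫ ω, ‖X ω - X' ω‖ * ‖X ω - X'' ω‖ ∂μ)
        * Real.sqrt ((∫ ω, ‖Y ω - Y' ω‖ ^ 2 ∂μ)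
            + (∫ ω, ‖Y ω - Y' ω‖ ∂μ) ^ 2
            - 2 * ∫ ω, ‖Y ω - Y' ω‖ * ‖Y ω - Y'' ω‖ ∂μ) := by
  have hZ0m : Measurable fun ω => (X ω, Y ω) := hXm.prodMk hYm
  have hZ1m : Measurable fun ω => (X' ω, Y' ω) := hX'm.prodMk hY'm
  have hZ2m : Measurable fun ω => (X'' ω, Y'' ω) := hX''m.prodMk hY''m
  set ν : Measure (EuclideanSpace ℝ (Fin N) × EuclideanSpace ℝ (Fin M)) :=
    μ.map (fun ω => (X ω, Y ω)) with hν
  haveI : IsProbabilityMeasure ν := Measure.isProbabilityMeasure_map hZ0m.aemeasurable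
  -- measurability of the kernels
  have hdam : Measurable (fun p :
      (EuclideanSpace ℝ (Fin N) × EuclideanSpace ℝ (Fin M))
        × (EuclideanSpace ℝ (Fin N) × EuclideanSpace ℝ (Fin M)) => ‖p.1.1 - p.2.1‖) :=
    (measurable_fst.fst.sub measurable_snd.fst).norm
  have hdbm : Measurable (fun p :
      (EuclideanSpace ℝ (Fin N) × EuclideanSpace ℝ (Fin M))
        × (EuclideanSpace ℝ (Fin N) × EuclideanSpace ℝ (Fin M)) => ‖p.1.2 - p.2.2‖) :=
    (measurable_fst.snd.sub measurable_snd.snd).norm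
  -- independence facts / product measure identifications
  have hFm : ∀ i : Fin 3, Measurable
      (![fun ω => (X ω, Y ω), fun ω => (X' ω, Y' ω), fun ω => (X'' ω, Y'' ω)] i) := by
    intro i; fin_cases i
    · exact hZ0m
    · exact hZ1m
    · exact hZ2m
  have h01 : IndepFun (fun ω => (X ω, Y ω)) (fun ω => (X' ω, Y' ω)) μ :=
    hindep.indepFun (by decide : (0 : Fin 3) ≠ 1)
  have h12 : IndepFun (fun ω => (X' ω, Y' ω)) (fun ω => (X'' ω, Y'' ω)) μ :=
    hindep.indepFun (by decide : (1 : Fin 3) ≠ 2)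
  have hmap01 : μ.map (fun ω => ((X ω, Y ω), (X' ω, Y' ω))) = ν.prod ν := by
    rw [(indepFun_iff_map_prod_eq_prod_map_map hZ0m.aemeasurable hZ1m.aemeasurable).1 h01,
      ← hid1.map_eq]
  have hmap12 : μ.map (fun ω => ((X' ω, Y' ω), (X'' ω, Y'' ω))) = ν.prod ν := by
    rw [(indepFun_iff_map_prod_eq_prod_map_map hZ1m.aemeasurable hZ2m.aemeasurable).1 h12,
      ← hid1.map_eq, ← hid2.map_eq]
  have hT : IndepFun (fun ω => (X ω, Y ω)) (fun ω => ((X' ω, Y' ω), (X'' ω, Y'' ω))) μ :=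
    (hindep.indepFun_prodMk hFm 1 2 0 (by decide) (by decide)).symm
  have hTm : Measurable (fun ω => ((X ω, Y ω), ((X' ω, Y' ω), (X'' ω, Y'' ω)))) :=
    hZ0m.prodMk (hZ1m.prodMk hZ2m)
  have hmapT : μ.map (fun ω => ((X ω, Y ω), ((X' ω, Y' ω), (X'' ω, Y'' ω))))
      = ν.prod (ν.prod ν) := by
    rw [(indepFun_iff_map_prod_eq_prod_map_map hZ0m.aemeasurable
      (hZ1m.prodMk hZ2m).aemeasurable).1 hT, hmap12]
  -- two-variable conversions
  have c1 : ∫ ω, ‖X ω - X' ω‖ * ‖Y ω - Y' ω‖ ∂μ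
      = ∫ p, ‖p.1.1 - p.2.1‖ * ‖p.1.2 - p.2.2‖ ∂(ν.prod ν) := by
    rw [← hmap01, integral_map (hZ0m.prodMk hZ1m).aemeasurable
      (f := fun p => ‖p.1.1 - p.2.1‖ * ‖p.1.2 - p.2.2‖) (hdam.mul hdbm).aestronglyMeasurable]
  have c6 : ∫ ω, ‖X ω - X' ω‖ ∂μ = ∫ p, ‖p.1.1 - p.2.1‖ ∂(ν.prod ν) := by
    rw [← hmap01, integral_map (hZ0m.prodMk hZ1m).aemeasurable hdam.aestronglyMeasurable]
  have c7 : ∫ ω, ‖Y ω - Y' ω‖ ∂μ = ∫ p, ‖p.1.2 - p.2.2‖ ∂(ν.prod ν) := by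
    rw [← hmap01, integral_map (hZ0m.prodMk hZ1m).aemeasurable hdbm.aestronglyMeasurable]
  have c8 : ∫ ω, ‖X ω - X' ω‖ ^ 2 ∂μ = ∫ p, ‖p.1.1 - p.2.1‖ ^ 2 ∂(ν.prod ν) := by
    rw [← hmap01, integral_map (hZ0m.prodMk hZ1m).aemeasurable
      (hdam.pow_const 2).aestronglyMeasurable]
  have c9 : ∫ ω, ‖Y ω - Y' ω‖ ^ 2 ∂μ = ∫ p, ‖p.1.2 - p.2.2‖ ^ 2 ∂(ν.prod ν) := by
    rw [← hmap01, integral_map (hZ0m.prodMk hZ1m).aemeasurable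
      (hdbm.pow_const 2).aestronglyMeasurable]
  -- integrability on the product
  have Ia' : Integrable (fun p :
      (EuclideanSpace ℝ (Fin N) × EuclideanSpace ℝ (Fin M))
        × (EuclideanSpace ℝ (Fin N) × EuclideanSpace ℝ (Fin M)) => ‖p.1.1 - p.2.1‖ ^ 2)
      (ν.prod ν) := by
    rw [← hmap01]
    exact (integrable_map_measure (hdam.pow_const 2).aestronglyMeasurable
      (hZ0m.prodMk hZ1m).aemeasurable).2 h6
  have Ib' : Integrable (fun p :
      (EuclideanSpace ℝ (Fin N) × EuclideanSpace ℝ (Fin M))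
        × (EuclideanSpace ℝ (Fin N) × EuclideanSpace ℝ (Fin M)) => ‖p.1.2 - p.2.2‖ ^ 2)
      (ν.prod ν) := by
    rw [← hmap01]
    exact (integrable_map_measure (hdbm.pow_const 2).aestronglyMeasurable
      (hZ0m.prodMk hZ1m).aemeasurable).2 h7
  -- three-variable conversions (via Fubini)
  have hG2m : Measurable (fun q :
      (EuclideanSpace ℝ (Fin N) × EuclideanSpace ℝ (Fin M))
        × ((EuclideanSpace ℝ (Fin N) × EuclideanSpace ℝ (Fin M))
          × (EuclideanSpace ℝ (Fin N) × EuclideanSpace ℝ (Fin M))) =>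
      ‖q.1.1 - q.2.1.1‖ * ‖q.1.2 - q.2.2.2‖) :=
    ((measurable_fst.fst.sub measurable_snd.fst.fst).norm).mul
      ((measurable_fst.snd.sub measurable_snd.snd.snd).norm)
  have hG3m : Measurable (fun q :
      (EuclideanSpace ℝ (Fin N) × EuclideanSpace ℝ (Fin M))
        × ((EuclideanSpace ℝ (Fin N) × EuclideanSpace ℝ (Fin M))
          × (EuclideanSpace ℝ (Fin N) × EuclideanSpace ℝ (Fin M))) =>
      ‖q.1.1 - q.2.2.1‖ * ‖q.1.2 - q.2.1.2‖) :=
    ((measurable_fst.fst.sub measurable_snd.snd.fst).norm).mul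
      ((measurable_fst.snd.sub measurable_snd.fst.snd).norm)
  have hG4m : Measurable (fun q :
      (EuclideanSpace ℝ (Fin N) × EuclideanSpace ℝ (Fin M))
        × ((EuclideanSpace ℝ (Fin N) × EuclideanSpace ℝ (Fin M))
          × (EuclideanSpace ℝ (Fin N) × EuclideanSpace ℝ (Fin M))) =>
      ‖q.1.1 - q.2.1.1‖ * ‖q.1.1 - q.2.2.1‖) :=
    ((measurable_fst.fst.sub measurable_snd.fst.fst).norm).mul
      ((measurable_fst.fst.sub measurable_snd.snd.fst).norm)
  have hG5m : Measurable (fun q :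
      (EuclideanSpace ℝ (Fin N) × EuclideanSpace ℝ (Fin M))
        × ((EuclideanSpace ℝ (Fin N) × EuclideanSpace ℝ (Fin M))
          × (EuclideanSpace ℝ (Fin N) × EuclideanSpace ℝ (Fin M))) =>
      ‖q.1.2 - q.2.1.2‖ * ‖q.1.2 - q.2.2.2‖) :=
    ((measurable_fst.snd.sub measurable_snd.fst.snd).norm).mul
      ((measurable_fst.snd.sub measurable_snd.snd.snd).norm)
  have c2 : ∫ ω, ‖X ω - X' ω‖ * ‖Y ω - Y'' ω‖ ∂μ
      = ∫ z, (∫ w, ‖z.1 - w.1‖ ∂ν) * (∫ w, ‖z.2 - w.2‖ ∂ν) ∂ν := by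
    have hGint : Integrable (fun q :
        (EuclideanSpace ℝ (Fin N) × EuclideanSpace ℝ (Fin M))
          × ((EuclideanSpace ℝ (Fin N) × EuclideanSpace ℝ (Fin M))
            × (EuclideanSpace ℝ (Fin N) × EuclideanSpace ℝ (Fin M))) =>
        ‖q.1.1 - q.2.1.1‖ * ‖q.1.2 - q.2.2.2‖) (ν.prod (ν.prod ν)) := by
      rw [← hmapT]
      exact (integrable_map_measure hG2m.aestronglyMeasurable hTm.aemeasurable).2 h2
    calc ∫ ω, ‖X ω - X' ω‖ * ‖Y ω - Y'' ω‖ ∂μ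
        = ∫ q, ‖q.1.1 - q.2.1.1‖ * ‖q.1.2 - q.2.2.2‖ ∂(ν.prod (ν.prod ν)) := by
          rw [← hmapT, integral_map hTm.aemeasurable hG2m.aestronglyMeasurable]
      _ = ∫ z, ∫ q, ‖z.1 - q.1.1‖ * ‖z.2 - q.2.2‖ ∂(ν.prod ν) ∂ν := by
          rw [integral_prod _ hGint]
      _ = ∫ z, (∫ w, ‖z.1 - w.1‖ ∂ν) * (∫ w, ‖z.2 - w.2‖ ∂ν) ∂ν := by
          refine integral_congr_ae (Filter.Eventually.of_forall fun z => ?_)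
          exact integral_prod_mul (μ := ν) (ν := ν) (fun w => ‖z.1 - w.1‖) (fun w => ‖z.2 - w.2‖)
  have c3 : ∫ ω, ‖X ω - X'' ω‖ * ‖Y ω - Y' ω‖ ∂μ
      = ∫ z, (∫ w, ‖z.1 - w.1‖ ∂ν) * (∫ w, ‖z.2 - w.2‖ ∂ν) ∂ν := by
    have hGint : Integrable (fun q :
        (EuclideanSpace ℝ (Fin N) × EuclideanSpace ℝ (Fin M))
          × ((EuclideanSpace ℝ (Fin N) × EuclideanSpace ℝ (Fin M))
            × (EuclideanSpace ℝ (Fin N) × EuclideanSpace ℝ (Fin M))) =>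
        ‖q.1.1 - q.2.2.1‖ * ‖q.1.2 - q.2.1.2‖) (ν.prod (ν.prod ν)) := by
      rw [← hmapT]
      exact (integrable_map_measure hG3m.aestronglyMeasurable hTm.aemeasurable).2 h3
    calc ∫ ω, ‖X ω - X'' ω‖ * ‖Y ω - Y' ω‖ ∂μ
        = ∫ q, ‖q.1.1 - q.2.2.1‖ * ‖q.1.2 - q.2.1.2‖ ∂(ν.prod (ν.prod ν)) := by
          rw [← hmapT, integral_map hTm.aemeasurable hG3m.aestronglyMeasurable]
      _ = ∫ z, ∫ q, ‖z.1 - q.2.1‖ * ‖z.2 - q.1.2‖ ∂(ν.prod ν) ∂ν := by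
          rw [integral_prod _ hGint]
      _ = ∫ z, (∫ w, ‖z.1 - w.1‖ ∂ν) * (∫ w, ‖z.2 - w.2‖ ∂ν) ∂ν := by
          refine integral_congr_ae (Filter.Eventually.of_forall fun z => ?_)
          have e : ∫ q, ‖z.1 - q.2.1‖ * ‖z.2 - q.1.2‖ ∂(ν.prod ν)
              = ∫ q, ‖z.2 - q.1.2‖ * ‖z.1 - q.2.1‖ ∂(ν.prod ν) :=
            integral_congr_ae (Filter.Eventually.of_forall fun q => mul_comm _ _)
          have h1 : ∫ q, ‖z.2 - q.1.2‖ * ‖z.1 - q.2.1‖ ∂(ν.prod ν)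
              = (∫ w, ‖z.2 - w.2‖ ∂ν) * ∫ w, ‖z.1 - w.1‖ ∂ν :=
            integral_prod_mul (μ := ν) (ν := ν) (fun w => ‖z.2 - w.2‖) (fun w => ‖z.1 - w.1‖)
          exact e.trans (h1.trans (mul_comm _ _))
  have c4 : ∫ ω, ‖X ω - X' ω‖ * ‖X ω - X'' ω‖ ∂μ
      = ∫ z, (∫ w, ‖z.1 - w.1‖ ∂ν) ^ 2 ∂ν := by
    have hGint : Integrable (fun q :
        (EuclideanSpace ℝ (Fin N) × EuclideanSpace ℝ (Fin M))
          × ((EuclideanSpace ℝ (Fin N) × EuclideanSpace ℝ (Fin M))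
            × (EuclideanSpace ℝ (Fin N) × EuclideanSpace ℝ (Fin M))) =>
        ‖q.1.1 - q.2.1.1‖ * ‖q.1.1 - q.2.2.1‖) (ν.prod (ν.prod ν)) := by
      rw [← hmapT]
      exact (integrable_map_measure hG4m.aestronglyMeasurable hTm.aemeasurable).2 h4
    calc ∫ ω, ‖X ω - X' ω‖ * ‖X ω - X'' ω‖ ∂μ
        = ∫ q, ‖q.1.1 - q.2.1.1‖ * ‖q.1.1 - q.2.2.1‖ ∂(ν.prod (ν.prod ν)) := by
          rw [← hmapT, integral_map hTm.aemeasurable hG4m.aestronglyMeasurable]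
      _ = ∫ z, ∫ q, ‖z.1 - q.1.1‖ * ‖z.1 - q.2.1‖ ∂(ν.prod ν) ∂ν := by
          rw [integral_prod _ hGint]
      _ = ∫ z, (∫ w, ‖z.1 - w.1‖ ∂ν) ^ 2 ∂ν := by
          refine integral_congr_ae (Filter.Eventually.of_forall fun z => ?_)
          have h1 : ∫ q, ‖z.1 - q.1.1‖ * ‖z.1 - q.2.1‖ ∂(ν.prod ν)
              = (∫ w, ‖z.1 - w.1‖ ∂ν) * ∫ w, ‖z.1 - w.1‖ ∂ν :=
            integral_prod_mul (μ := ν) (ν := ν) (fun w => ‖z.1 - w.1‖) (fun w => ‖z.1 - w.1‖)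
          exact h1.trans (pow_two _).symm
  have c5 : ∫ ω, ‖Y ω - Y' ω‖ * ‖Y ω - Y'' ω‖ ∂μ
      = ∫ z, (∫ w, ‖z.2 - w.2‖ ∂ν) ^ 2 ∂ν := by
    have hGint : Integrable (fun q :
        (EuclideanSpace ℝ (Fin N) × EuclideanSpace ℝ (Fin M))
          × ((EuclideanSpace ℝ (Fin N) × EuclideanSpace ℝ (Fin M))
            × (EuclideanSpace ℝ (Fin N) × EuclideanSpace ℝ (Fin M))) =>
        ‖q.1.2 - q.2.1.2‖ * ‖q.1.2 - q.2.2.2‖) (ν.prod (ν.prod ν)) := by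
      rw [← hmapT]
      exact (integrable_map_measure hG5m.aestronglyMeasurable hTm.aemeasurable).2 h5
    calc ∫ ω, ‖Y ω - Y' ω‖ * ‖Y ω - Y'' ω‖ ∂μ
        = ∫ q, ‖q.1.2 - q.2.1.2‖ * ‖q.1.2 - q.2.2.2‖ ∂(ν.prod (ν.prod ν)) := by
          rw [← hmapT, integral_map hTm.aemeasurable hG5m.aestronglyMeasurable]
      _ = ∫ z, ∫ q, ‖z.2 - q.1.2‖ * ‖z.2 - q.2.2‖ ∂(ν.prod ν) ∂ν := by
          rw [integral_prod _ hGint]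
      _ = ∫ z, (∫ w, ‖z.2 - w.2‖ ∂ν) ^ 2 ∂ν := by
          refine integral_congr_ae (Filter.Eventually.of_forall fun z => ?_)
          have h1 : ∫ q, ‖z.2 - q.1.2‖ * ‖z.2 - q.2.2‖ ∂(ν.prod ν)
              = (∫ w, ‖z.2 - w.2‖ ∂ν) * ∫ w, ‖z.2 - w.2‖ ∂ν :=
            integral_prod_mul (μ := ν) (ν := ν) (fun w => ‖z.2 - w.2‖) (fun w => ‖z.2 - w.2‖)
          exact h1.trans (pow_two _).symm
  -- apply the key inequality
  have hkey := key_ineq (ρ := ν) (fun z w => ‖z.1 - w.1‖) (fun z w => ‖z.2 - w.2‖)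
    hdam hdbm (fun z w => norm_sub_rev _ _) (fun z w => norm_sub_rev _ _) Ia' Ib'
  beta_reduce at hkey
  rw [c1, c2, c3, c6, c7, c8, c9, c4, c5]
  linarith [hkey]
end

section
/- Let X, X', X'' be iid random vectors taking values in ℝ^N with finite first moments, and assume ‖X−X'‖² and ‖X−X'‖‖X−X''‖ are integrable. Then the covariance of ‖X−X'‖ and ‖X−X''‖ is nonnegative: cov(‖X−X'‖, ‖X−X''‖) ≥ 0. -/
open MeasureTheory ProbabilityTheory

/-- For iid random vectors `X, X', X''` in `ℝ^N` with finite first moments,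
`cov(‖X−X'‖, ‖X−X''‖) = E[‖X−X'‖‖X−X''‖] − E[‖X−X'‖]E[‖X−X''‖] ≥ 0`. -/
theorem cov_norm_sub_nonneg
    {Ω : Type*} [MeasurableSpace Ω] (μ : Measure Ω) [IsProbabilityMeasure μ]
    (N : ℕ)
    (X X' X'' : Ω → EuclideanSpace ℝ (Fin N))
    (hXm : Measurable X) (hX'm : Measurable X') (hX''m : Measurable X'')
    (hindep : iIndepFun ![X, X', X''] μ)
    (hid1 : IdentDistrib X X' μ μ)
    (hid2 : IdentDistrib X X'' μ μ)
    (hXi : Integrable X μ) (hX'i : Integrable X' μ) (hX''i : Integrable X'' μ)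
    (h1 : Integrable (fun ω => ‖X ω - X' ω‖ ^ 2) μ)
    (h2 : Integrable (fun ω => ‖X ω - X' ω‖ * ‖X ω - X'' ω‖) μ) :
    0 ≤ (∫ ω, ‖X ω - X' ω‖ * ‖X ω - X'' ω‖ ∂μ)
        - (∫ ω, ‖X ω - X' ω‖ ∂μ) * (∫ ω, ‖X ω - X'' ω‖ ∂μ) := by
  set ν : Measure (EuclideanSpace ℝ (Fin N)) := μ.map X with hνdef
  have hνP : IsProbabilityMeasure ν := Measure.isProbabilityMeasure_map hXm.aemeasurable
  have hX'map : μ.map X' = ν := hid1.map_eq.symm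
  have hX''map : μ.map X'' = ν := hid2.map_eq.symm
  have hpm : ∀ i, Measurable (![X, X', X''] i) := by
    intro i; fin_cases i <;> assumption
  -- joint laws
  have hind23 : IndepFun X' X'' μ := by
    have := hindep.indepFun (i := 1) (j := 2) (by decide)
    simpa using this
  have h23 : μ.map (fun ω => (X' ω, X'' ω)) = ν.prod ν := by
    rw [(indepFun_iff_map_prod_eq_prod_map_map hX'm.aemeasurable
      hX''m.aemeasurable).mp hind23, hX'map, hX''map]
  have hind1_23 : IndepFun X (fun ω => (X' ω, X'' ω)) μ := by
    have := (hindep.indepFun_prodMk hpm 1 2 0 (by decide) (by decide)).symm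
    simpa using this
  have hT : μ.map (fun ω => (X ω, X' ω, X'' ω)) = ν.prod (ν.prod ν) := by
    rw [(indepFun_iff_map_prod_eq_prod_map_map hXm.aemeasurable
      (hX'm.prodMk hX''m).aemeasurable).mp hind1_23, h23]
  have hP12 : μ.map (fun ω => (X ω, X' ω)) = ν.prod ν := by
    have hi : IndepFun X X' μ := by
      have := hindep.indepFun (i := 0) (j := 1) (by decide)
      simpa using this
    rw [(indepFun_iff_map_prod_eq_prod_map_map hXm.aemeasurable
      hX'm.aemeasurable).mp hi, hX'map]
  have hP13 : μ.map (fun ω => (X ω, X'' ω)) = ν.prod ν := by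
    have hi : IndepFun X X'' μ := by
      have := hindep.indepFun (i := 0) (j := 2) (by decide)
      simpa using this
    rw [(indepFun_iff_map_prod_eq_prod_map_map hXm.aemeasurable
      hX''m.aemeasurable).mp hi, hX''map]
  -- functions
  set g : EuclideanSpace ℝ (Fin N) × EuclideanSpace ℝ (Fin N) × EuclideanSpace ℝ (Fin N) → ℝ :=
    fun p => ‖p.1 - p.2.1‖ * ‖p.1 - p.2.2‖ with hgdef
  have hgc : Continuous g :=
    ((continuous_fst.sub (continuous_fst.comp continuous_snd)).norm).mul
      ((continuous_fst.sub (continuous_snd.comp continuous_snd)).norm)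
  set q : EuclideanSpace ℝ (Fin N) × EuclideanSpace ℝ (Fin N) → ℝ :=
    fun p => ‖p.1 - p.2‖ with hqdef
  have hqc : Continuous q := (continuous_fst.sub continuous_snd).norm
  set F : EuclideanSpace ℝ (Fin N) → ℝ := fun x => ∫ y, ‖x - y‖ ∂ν with hFdef
  have hFsm : StronglyMeasurable F :=
    hqc.stronglyMeasurable.integral_prod_right'
  -- integrability of g over the product law
  have hTm : Measurable (fun ω => (X ω, X' ω, X'' ω)) :=
    hXm.prodMk (hX'm.prodMk hX''m)
  have hg : Integrable g (ν.prod (ν.prod ν)) := by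
    rw [← hT]
    exact (integrable_map_measure (hgc.aestronglyMeasurable) hTm.aemeasurable).mpr h2
  have hq12 : Integrable q (ν.prod ν) := by
    rw [← hP12]
    exact (integrable_map_measure (hqc.aestronglyMeasurable)
      (hXm.prodMk hX'm).aemeasurable).mpr ((hXi.sub hX'i).norm)
  -- inner integral identity
  have hinner : ∀ x, (∫ p, g (x, p) ∂(ν.prod ν)) = F x * F x := by
    intro x
    have := integral_prod_mul (μ := ν) (ν := ν)
      (f := fun y => ‖x - y‖) (g := fun z => ‖x - z‖)
    simpa [hgdef] using this
  -- A = ∫ F * F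
  have hA : (∫ ω, ‖X ω - X' ω‖ * ‖X ω - X'' ω‖ ∂μ) = ∫ x, F x * F x ∂ν := by
    have h₁ : (∫ ω, ‖X ω - X' ω‖ * ‖X ω - X'' ω‖ ∂μ)
        = ∫ p, g p ∂(ν.prod (ν.prod ν)) := by
      rw [← hT, integral_map hTm.aemeasurable hgc.aestronglyMeasurable]
    rw [h₁, MeasureTheory.integral_prod _ hg]
    exact integral_congr_ae (Filter.Eventually.of_forall fun x => hinner x)
  -- B = ∫ F
  have hB : (∫ ω, ‖X ω - X' ω‖ ∂μ) = ∫ x, F x ∂ν := by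
    have h₁ : (∫ ω, ‖X ω - X' ω‖ ∂μ) = ∫ p, q p ∂(ν.prod ν) := by
      rw [← hP12, integral_map (hXm.prodMk hX'm).aemeasurable hqc.aestronglyMeasurable]
    rw [h₁, MeasureTheory.integral_prod _ hq12]
  have hC : (∫ ω, ‖X ω - X'' ω‖ ∂μ) = ∫ x, F x ∂ν := by
    have h₁ : (∫ ω, ‖X ω - X'' ω‖ ∂μ) = ∫ p, q p ∂(ν.prod ν) := by
      rw [← hP13, integral_map (hXm.prodMk hX''m).aemeasurable hqc.aestronglyMeasurable]
    have hq13 : Integrable q (ν.prod ν) := by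
      rw [← hP13]
      exact (integrable_map_measure (hqc.aestronglyMeasurable)
        (hXm.prodMk hX''m).aemeasurable).mpr ((hXi.sub hX''i).norm)
    rw [h₁, MeasureTheory.integral_prod _ hq13]
  -- F ∈ L²(ν)
  have hF2int : Integrable (fun x => F x * F x) ν := by
    have h := hg.integral_prod_left
    exact h.congr (Filter.Eventually.of_forall fun x => hinner x)
  have hMem : MemLp F 2 ν := by
    refine (memLp_two_iff_integrable_sq hFsm.aestronglyMeasurable).mpr ?_
    simpa [pow_two] using hF2int
  have hvar := variance_nonneg F ν
  rw [variance_eq_sub hMem] at hvar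
  rw [hA, hB, hC]
  simpa [pow_two] using hvar
end

section
/- Let X, X', X'' be iid random vectors taking values in ℝ^N with finite first moments, and assume ‖X−X'‖² and ‖X−X'‖‖X−X''‖ are integrable. Then dCov²(X,X) ≤ Var(‖X−X'‖). Equivalently, dVar(X) ≤ √(Var(‖X−X'‖)). -/
open MeasureTheory ProbabilityTheory

/-- For iid random vectors `X, X', X''` in `ℝ^N` with finite first moments,
`dCov²(X,X) = E[‖X−X'‖²] + (E[‖X−X'‖])² − 2E[‖X−X'‖‖X−X''‖] ≤ Var(‖X−X'‖)`,
where `Var(U) = E[U²] − (E[U])²`. -/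
theorem dVar_sq_le_var_norm_sub
    {Ω : Type*} [MeasurableSpace Ω] (μ : Measure Ω) [IsProbabilityMeasure μ]
    (N : ℕ)
    (X X' X'' : Ω → EuclideanSpace ℝ (Fin N))
    (hXm : Measurable X) (hX'm : Measurable X') (hX''m : Measurable X'')
    (hindep : iIndepFun ![X, X', X''] μ)
    (hid1 : IdentDistrib X X' μ μ)
    (hid2 : IdentDistrib X X'' μ μ)
    (hXi : Integrable X μ) (hX'i : Integrable X' μ) (hX''i : Integrable X'' μ)
    (h1 : Integrable (fun ω => ‖X ω - X' ω‖ ^ 2) μ)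
    (h2 : Integrable (fun ω => ‖X ω - X' ω‖ * ‖X ω - X'' ω‖) μ) :
    (∫ ω, ‖X ω - X' ω‖ ^ 2 ∂μ) + (∫ ω, ‖X ω - X' ω‖ ∂μ) ^ 2
        - 2 * ∫ ω, ‖X ω - X' ω‖ * ‖X ω - X'' ω‖ ∂μ
      ≤ (∫ ω, ‖X ω - X' ω‖ ^ 2 ∂μ) - (∫ ω, ‖X ω - X' ω‖ ∂μ) ^ 2 := by
  set ν : Measure (EuclideanSpace ℝ (Fin N)) := μ.map X with hν
  have hνp : IsProbabilityMeasure ν := Measure.isProbabilityMeasure_map hXm.aemeasurable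
  have hmapX' : μ.map X' = ν := hid1.map_eq.symm
  have hmapX'' : μ.map X'' = ν := hid2.map_eq.symm
  -- independence facts
  have hmeas : ∀ i, Measurable (![X, X', X''] i) := by
    intro i; fin_cases i <;> simpa using ‹_›
  have hind12 : IndepFun X' X'' μ := by
    have := hindep.indepFun (i := 1) (j := 2) (by decide)
    simpa using this
  have hpair : IndepFun X (fun ω => (X' ω, X'' ω)) μ := by
    have := (hindep.indepFun_prodMk hmeas 1 2 0 (by decide) (by decide)).symm
    simpa using this
  have hXX' : IndepFun X X' μ := by
    have := hindep.indepFun (i := 0) (j := 1) (by decide)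
    simpa using this
  -- map identities
  have hmap2 : μ.map (fun ω => (X ω, X' ω)) = ν.prod ν := by
    rw [(indepFun_iff_map_prod_eq_prod_map_map hXm.aemeasurable hX'm.aemeasurable).1 hXX',
      hmapX']
  have hmapP : μ.map (fun ω => (X' ω, X'' ω)) = ν.prod ν := by
    rw [(indepFun_iff_map_prod_eq_prod_map_map hX'm.aemeasurable hX''m.aemeasurable).1 hind12,
      hmapX', hmapX'']
  have hmap3 : μ.map (fun ω => (X ω, (X' ω, X'' ω))) = ν.prod (ν.prod ν) := by
    rw [(indepFun_iff_map_prod_eq_prod_map_map hXm.aemeasurable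
      (hX'm.prodMk hX''m).aemeasurable).1 hpair, hmapP]
  -- integrands
  have hc2 : Continuous (fun p : (EuclideanSpace ℝ (Fin N)) × (EuclideanSpace ℝ (Fin N)) => ‖p.1 - p.2‖) := by fun_prop
  have hc3 : Continuous (fun p : (EuclideanSpace ℝ (Fin N)) × ((EuclideanSpace ℝ (Fin N)) × (EuclideanSpace ℝ (Fin N))) => ‖p.1 - p.2.1‖ * ‖p.1 - p.2.2‖) := by fun_prop
  -- transfer integrals
  have hI1 : ∫ ω, ‖X ω - X' ω‖ ∂μ = ∫ p, ‖p.1 - p.2‖ ∂(ν.prod ν) := by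
    rw [← hmap2, integral_map (hXm.prodMk hX'm).aemeasurable hc2.aestronglyMeasurable]
  have hI1int : Integrable (fun p : (EuclideanSpace ℝ (Fin N)) × (EuclideanSpace ℝ (Fin N)) => ‖p.1 - p.2‖) (ν.prod ν) := by
    rw [← hmap2]
    refine (integrable_map_measure hc2.aestronglyMeasurable
      (hXm.prodMk hX'm).aemeasurable).2 ?_
    exact (hXi.sub hX'i).norm
  have hI2 : ∫ ω, ‖X ω - X' ω‖ * ‖X ω - X'' ω‖ ∂μ
      = ∫ p, ‖p.1 - p.2.1‖ * ‖p.1 - p.2.2‖ ∂(ν.prod (ν.prod ν)) := by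
    rw [← hmap3, integral_map (hXm.prodMk (hX'm.prodMk hX''m)).aemeasurable
      hc3.aestronglyMeasurable]
  have hI2int : Integrable (fun p : (EuclideanSpace ℝ (Fin N)) × ((EuclideanSpace ℝ (Fin N)) × (EuclideanSpace ℝ (Fin N))) => ‖p.1 - p.2.1‖ * ‖p.1 - p.2.2‖)
      (ν.prod (ν.prod ν)) := by
    rw [← hmap3]
    exact (integrable_map_measure hc3.aestronglyMeasurable
      (hXm.prodMk (hX'm.prodMk hX''m)).aemeasurable).2 h2
  -- the function f x = ∫ y, ‖x - y‖ ∂ν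
  set f : (EuclideanSpace ℝ (Fin N)) → ℝ := fun x => ∫ y, ‖x - y‖ ∂ν with hf
  have hmul : ∀ x : (EuclideanSpace ℝ (Fin N)), ∫ q : (EuclideanSpace ℝ (Fin N)) × (EuclideanSpace ℝ (Fin N)), ‖x - q.1‖ * ‖x - q.2‖ ∂(ν.prod ν) = f x ^ 2 := by
    intro x
    have : ∫ q : (EuclideanSpace ℝ (Fin N)) × (EuclideanSpace ℝ (Fin N)), ‖x - q.1‖ * ‖x - q.2‖ ∂(ν.prod ν)
        = (∫ y, ‖x - y‖ ∂ν) * ∫ y, ‖x - y‖ ∂ν :=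
      integral_prod_mul (fun y => ‖x - y‖) (fun y => ‖x - y‖)
    rw [this, hf, sq]
  have hEf : ∫ ω, ‖X ω - X' ω‖ ∂μ = ∫ x, f x ∂ν := by
    rw [hI1, integral_prod _ hI1int]
  have hEf2 : ∫ ω, ‖X ω - X' ω‖ * ‖X ω - X'' ω‖ ∂μ = ∫ x, (f x) ^ 2 ∂ν := by
    rw [hI2, integral_prod _ hI2int]
    exact integral_congr_ae (Filter.Eventually.of_forall fun x => hmul x)
  -- integrability of f²
  have hf2int : Integrable (fun x => (f x) ^ 2) ν := by
    have h' := hI2int.integral_prod_left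
    exact h'.congr (Filter.Eventually.of_forall fun x => hmul x)
  have hfsm : AEStronglyMeasurable f ν := by
    have : StronglyMeasurable f :=
      MeasureTheory.StronglyMeasurable.integral_prod_right (f := fun x y => ‖x - y‖)
        hc2.stronglyMeasurable
    exact this.aestronglyMeasurable
  have hfmem : MemLp f 2 ν := (memLp_two_iff_integrable_sq hfsm).2 hf2int
  -- Cauchy-Schwarz via variance
  have hvar : (∫ x, f x ∂ν) ^ 2 ≤ ∫ x, (f x) ^ 2 ∂ν := by
    have h := variance_nonneg f ν
    rw [variance_eq_sub hfmem] at h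
    simp only [Pi.pow_apply] at h
    linarith [h]
  rw [hEf, hEf2]
  linarith [hvar]
end

section
/- Main theorem: Let (X,Y), (X',Y'), (X'',Y'') be iid pairs of random vectors, with X taking values in [a,b]^N ⊆ ℝ^N and Y taking values in [c,d]^M ⊆ ℝ^M, for real numbers a ≤ b, c ≤ d and natural numbers N, M ≥ 1. Then dCov(X,Y) ≤ (1/2)·√((b−a)(d−c)·√(N·M)). Equivalently, dCov²(X,Y) ≤ (1/4)·(b−a)(d−c)·√(N·M). -/
open MeasureTheory ProbabilityTheory
set_option linter.unusedSectionVars false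
set_option linter.unusedVariables false
set_option maxHeartbeats 2000000

section Core
variable {S : Type*} [MeasurableSpace S] (ν : Measure S)

private lemma integrable_of_bdd {T : Type*} [MeasurableSpace T] {τ : Measure T}
    [IsFiniteMeasure τ] {h : T → ℝ} (hm : AEStronglyMeasurable h τ) {C : ℝ}
    (hb : ∀ t, |h t| ≤ C) : Integrable h τ :=
  (integrable_const C).mono' hm (Filter.Eventually.of_forall fun t => by
    simpa [Real.norm_eq_abs] using hb t)

private noncomputable def m1 (φ : S → S → ℝ) (p : S) : ℝ := ∫ q, φ p q ∂ν
private noncomputable def mF (φ : S → S → ℝ) : ℝ := ∫ p, m1 ν φ p ∂ν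
private noncomputable def tk (φ : S → S → ℝ) (p q : S) : ℝ :=
  φ p q - m1 ν φ p - m1 ν φ q + mF ν φ

variable [IsProbabilityMeasure ν] {φ ψ : S → S → ℝ} {Cφ Cψ : ℝ}

private lemma m1_sm (hφm : Measurable (Function.uncurry φ)) :
    StronglyMeasurable (m1 ν φ) := hφm.stronglyMeasurable.integral_prod_right'

private lemma sect_int (hφm : Measurable (Function.uncurry φ))
    (hφ0 : ∀ p q, 0 ≤ φ p q) (hφC : ∀ p q, φ p q ≤ Cφ) (p : S) :
    Integrable (φ p) ν :=
  integrable_of_bdd (Measurable.of_uncurry_left hφm).aestronglyMeasurable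
    (fun q => abs_le.2 ⟨by linarith [hφ0 p q, hφC p q], hφC p q⟩)

private lemma m1_nonneg (hφ0 : ∀ p q, 0 ≤ φ p q) (p : S) : 0 ≤ m1 ν φ p :=
  integral_nonneg (fun q => hφ0 p q)

private lemma m1_le (hφm : Measurable (Function.uncurry φ))
    (hφ0 : ∀ p q, 0 ≤ φ p q) (hφC : ∀ p q, φ p q ≤ Cφ) (p : S) :
    m1 ν φ p ≤ Cφ := by
  have h := integral_mono (sect_int ν hφm hφ0 hφC p) (integrable_const Cφ) (fun q => hφC p q)
  simpa [m1] using h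

private lemma m1_abs_le (hφm : Measurable (Function.uncurry φ))
    (hφ0 : ∀ p q, 0 ≤ φ p q) (hφC : ∀ p q, φ p q ≤ Cφ) (p : S) :
    |m1 ν φ p| ≤ Cφ :=
  abs_le.2 ⟨by linarith [m1_nonneg ν hφ0 p, m1_le ν hφm hφ0 hφC p], m1_le ν hφm hφ0 hφC p⟩

private lemma m1_int (hφm : Measurable (Function.uncurry φ))
    (hφ0 : ∀ p q, 0 ≤ φ p q) (hφC : ∀ p q, φ p q ≤ Cφ) :
    Integrable (m1 ν φ) ν :=
  integrable_of_bdd (m1_sm ν hφm).aestronglyMeasurable (m1_abs_le ν hφm hφ0 hφC)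

private lemma mF_nonneg (hφ0 : ∀ p q, 0 ≤ φ p q) : 0 ≤ mF ν φ :=
  integral_nonneg (fun p => m1_nonneg ν hφ0 p)

private lemma mF_le (hφm : Measurable (Function.uncurry φ))
    (hφ0 : ∀ p q, 0 ≤ φ p q) (hφC : ∀ p q, φ p q ≤ Cφ) : mF ν φ ≤ Cφ := by
  have h := integral_mono (m1_int ν hφm hφ0 hφC) (integrable_const Cφ)
    (fun p => m1_le ν hφm hφ0 hφC p)
  simpa [mF] using h

private lemma tk_int_zero (hφm : Measurable (Function.uncurry φ))
    (hφ0 : ∀ p q, 0 ≤ φ p q) (hφC : ∀ p q, φ p q ≤ Cφ) (p : S) :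
    ∫ q, tk ν φ p q ∂ν = 0 := by
  have h1 : Integrable (fun q => φ p q - m1 ν φ p) ν :=
    (sect_int ν hφm hφ0 hφC p).sub (integrable_const _)
  have h2 : Integrable (fun q => m1 ν φ q - mF ν φ) ν :=
    (m1_int ν hφm hφ0 hφC).sub (integrable_const _)
  have e : (fun q => tk ν φ p q) = fun q => (φ p q - m1 ν φ p) - (m1 ν φ q - mF ν φ) := by
    funext q; simp only [tk]; ring
  rw [e, integral_sub h1 h2, integral_sub (sect_int ν hφm hφ0 hφC p) (integrable_const _),
    integral_sub (m1_int ν hφm hφ0 hφC) (integrable_const _)]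
  simp [m1, mF]

private lemma tk_symm (hφs : ∀ p q, φ p q = φ q p) (p q : S) :
    tk ν φ p q = tk ν φ q p := by
  simp only [tk]; rw [hφs p q]; ring

private lemma tk_meas (hφm : Measurable (Function.uncurry φ)) :
    Measurable (Function.uncurry (tk ν φ)) := by
  have h1 : Measurable (m1 ν φ) := (m1_sm ν hφm).measurable
  exact ((hφm.sub (h1.comp measurable_fst)).sub (h1.comp measurable_snd)).add measurable_const

private lemma tk_abs_le (hφm : Measurable (Function.uncurry φ))
    (hφ0 : ∀ p q, 0 ≤ φ p q) (hφC : ∀ p q, φ p q ≤ Cφ) (p q : S) :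
    |tk ν φ p q| ≤ 2 * Cφ := by
  have h1 := hφ0 p q; have h2 := hφC p q
  have h3 := m1_nonneg ν hφ0 p; have h4 := m1_le ν hφm hφ0 hφC p
  have h5 := m1_nonneg ν hφ0 q; have h6 := m1_le ν hφm hφ0 hφC q
  have h7 := mF_nonneg ν hφ0; have h8 := mF_le ν hφm hφ0 hφC
  rw [abs_le, tk]; constructor <;> nlinarith

private lemma int_prod_mul_bdd {u v : S × S → ℝ} (hu : Measurable u) (hv : Measurable v)
    {Cu Cv : ℝ} (hub : ∀ z, |u z| ≤ Cu) (hvb : ∀ z, |v z| ≤ Cv) :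
    Integrable (fun z => u z * v z) (ν.prod ν) :=
  integrable_of_bdd (hu.mul hv).aestronglyMeasurable (C := Cu * Cv) (fun z => by
    rw [abs_mul]
    exact mul_le_mul (hub z) (hvb z) (abs_nonneg _) (le_trans (abs_nonneg _) (hub z)))

private lemma inner_zero_fst
    (hzero : ∀ p, ∫ q, tk ν φ p q ∂ν = 0)
    (htkb : ∀ p q, |tk ν φ p q| ≤ 2 * Cφ)
    (htkm : Measurable (Function.uncurry (tk ν φ)))
    {g : S → ℝ} (hg : Measurable g) {C : ℝ} (hgb : ∀ p, |g p| ≤ C) :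
    ∫ z, tk ν φ z.1 z.2 * g z.1 ∂(ν.prod ν) = 0 := by
  have hint : Integrable (fun z : S × S => tk ν φ z.1 z.2 * g z.1) (ν.prod ν) :=
    int_prod_mul_bdd ν htkm (hg.comp measurable_fst) (fun z => htkb z.1 z.2)
      (fun z => hgb z.1)
  rw [integral_prod _ hint]
  have h : ∀ p, ∫ q, tk ν φ p q * g p ∂ν = 0 := fun p => by
    rw [integral_mul_const, hzero p, zero_mul]
  simp only [h, integral_zero]

private lemma inner_zero_snd
    (hzero : ∀ p, ∫ q, tk ν φ p q ∂ν = 0)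
    (htkb : ∀ p q, |tk ν φ p q| ≤ 2 * Cφ)
    (htkm : Measurable (Function.uncurry (tk ν φ)))
    (htks : ∀ p q, tk ν φ p q = tk ν φ q p)
    {g : S → ℝ} (hg : Measurable g) {C : ℝ} (hgb : ∀ p, |g p| ≤ C) :
    ∫ z, tk ν φ z.1 z.2 * g z.2 ∂(ν.prod ν) = 0 := by
  have hint : Integrable (fun z : S × S => tk ν φ z.1 z.2 * g z.2) (ν.prod ν) :=
    int_prod_mul_bdd ν htkm (hg.comp measurable_snd) (fun z => htkb z.1 z.2)
      (fun z => hgb z.2)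
  rw [integral_prod _ hint, integral_integral_swap hint]
  have h : ∀ q, ∫ p, tk ν φ p q * g q ∂ν = 0 := fun q => by
    rw [integral_mul_const]
    have e : ∫ p, tk ν φ p q ∂ν = ∫ p, tk ν φ q p ∂ν :=
      integral_congr_ae (Filter.Eventually.of_forall fun p => htks p q)
    rw [e, hzero q, zero_mul]
  simp only [h, integral_zero]

private lemma mF_prod (hφm : Measurable (Function.uncurry φ))
    (hφ0 : ∀ p q, 0 ≤ φ p q) (hφC : ∀ p q, φ p q ≤ Cφ) :
    ∫ z, φ z.1 z.2 ∂(ν.prod ν) = mF ν φ := by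
  have hint : Integrable (fun z : S × S => φ z.1 z.2) (ν.prod ν) :=
    integrable_of_bdd hφm.aestronglyMeasurable (C := Cφ)
      (fun z => abs_le.2 ⟨by linarith [hφ0 z.1 z.2, hφC z.1 z.2], hφC z.1 z.2⟩)
  rw [integral_prod _ hint]; rfl

private lemma expand_cross
    (hφm : Measurable (Function.uncurry φ)) (hψm : Measurable (Function.uncurry ψ))
    (hφs : ∀ p q, φ p q = φ q p) (hψs : ∀ p q, ψ p q = ψ q p)
    (hφ0 : ∀ p q, 0 ≤ φ p q) (hψ0 : ∀ p q, 0 ≤ ψ p q)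
    (hφC : ∀ p q, φ p q ≤ Cφ) (hψC : ∀ p q, ψ p q ≤ Cψ) :
    ∫ z, tk ν φ z.1 z.2 * tk ν ψ z.1 z.2 ∂(ν.prod ν)
      = (∫ z, φ z.1 z.2 * ψ z.1 z.2 ∂(ν.prod ν))
        - 2 * (∫ p, m1 ν φ p * m1 ν ψ p ∂ν) + mF ν φ * mF ν ψ := by
  have hzφ := tk_int_zero ν hφm hφ0 hφC
  have htkbφ := tk_abs_le ν hφm hφ0 hφC
  have htkmφ := tk_meas ν hφm
  have htksφ := tk_symm ν hφs
  have hm1ψm : Measurable (m1 ν ψ) := (m1_sm ν hψm).measurable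
  have hm1ψb := m1_abs_le ν hψm hψ0 hψC
  have hm1φm : Measurable (m1 ν φ) := (m1_sm ν hφm).measurable
  have hm1φb := m1_abs_le ν hφm hφ0 hφC
  have hψb : ∀ z : S × S, |ψ z.1 z.2| ≤ Cψ := fun z =>
    abs_le.2 ⟨by linarith [hψ0 z.1 z.2, hψC z.1 z.2], hψC z.1 z.2⟩
  have hφb : ∀ z : S × S, |φ z.1 z.2| ≤ Cφ := fun z =>
    abs_le.2 ⟨by linarith [hφ0 z.1 z.2, hφC z.1 z.2], hφC z.1 z.2⟩
  have hmFψb : |mF ν ψ| ≤ Cψ := abs_le.2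
    ⟨by linarith [mF_nonneg ν hψ0, mF_le ν hψm hψ0 hψC], mF_le ν hψm hψ0 hψC⟩
  -- integrability facts
  have iTψ : Integrable (fun z : S × S => tk ν φ z.1 z.2 * ψ z.1 z.2) (ν.prod ν) :=
    int_prod_mul_bdd ν htkmφ hψm (fun z => htkbφ z.1 z.2) hψb
  have iT1 : Integrable (fun z : S × S => tk ν φ z.1 z.2 * m1 ν ψ z.1) (ν.prod ν) :=
    int_prod_mul_bdd ν htkmφ (hm1ψm.comp measurable_fst) (fun z => htkbφ z.1 z.2)
      (fun z => hm1ψb z.1)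
  have iT2 : Integrable (fun z : S × S => tk ν φ z.1 z.2 * m1 ν ψ z.2) (ν.prod ν) :=
    int_prod_mul_bdd ν htkmφ (hm1ψm.comp measurable_snd) (fun z => htkbφ z.1 z.2)
      (fun z => hm1ψb z.2)
  have iT3 : Integrable (fun z : S × S => tk ν φ z.1 z.2 * mF ν ψ) (ν.prod ν) :=
    int_prod_mul_bdd ν htkmφ measurable_const (fun z => htkbφ z.1 z.2)
      (fun _ => hmFψb)
  -- step 1
  have e1 : (fun z : S × S => tk ν φ z.1 z.2 * tk ν ψ z.1 z.2)
      = fun z => ((tk ν φ z.1 z.2 * ψ z.1 z.2 - tk ν φ z.1 z.2 * m1 ν ψ z.1)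
          - tk ν φ z.1 z.2 * m1 ν ψ z.2) + tk ν φ z.1 z.2 * mF ν ψ := by
    funext z; simp only [tk]; ring
  have hz1 : ∫ z, tk ν φ z.1 z.2 * m1 ν ψ z.1 ∂(ν.prod ν) = 0 :=
    inner_zero_fst ν hzφ htkbφ htkmφ hm1ψm hm1ψb
  have hz2 : ∫ z, tk ν φ z.1 z.2 * m1 ν ψ z.2 ∂(ν.prod ν) = 0 :=
    inner_zero_snd ν hzφ htkbφ htkmφ htksφ hm1ψm hm1ψb
  have hz3 : ∫ z, tk ν φ z.1 z.2 * mF ν ψ ∂(ν.prod ν) = 0 :=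
    inner_zero_fst ν hzφ htkbφ htkmφ (measurable_const : Measurable fun _ : S => mF ν ψ)
      (fun _ => hmFψb)
  have i12 : Integrable (fun z : S × S =>
      tk ν φ z.1 z.2 * ψ z.1 z.2 - tk ν φ z.1 z.2 * m1 ν ψ z.1) (ν.prod ν) := by
    exact iTψ.sub iT1
  have i123 : Integrable (fun z : S × S =>
      tk ν φ z.1 z.2 * ψ z.1 z.2 - tk ν φ z.1 z.2 * m1 ν ψ z.1
        - tk ν φ z.1 z.2 * m1 ν ψ z.2) (ν.prod ν) := by
    exact i12.sub iT2
  have step1 : ∫ z, tk ν φ z.1 z.2 * tk ν ψ z.1 z.2 ∂(ν.prod ν)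
      = ∫ z, tk ν φ z.1 z.2 * ψ z.1 z.2 ∂(ν.prod ν) := by
    rw [e1, integral_add i123 iT3, integral_sub i12 iT2,
      integral_sub iTψ iT1, hz1, hz2, hz3]
    ring
  -- step 2
  have iφψ : Integrable (fun z : S × S => φ z.1 z.2 * ψ z.1 z.2) (ν.prod ν) :=
    int_prod_mul_bdd ν hφm hψm hφb hψb
  have iU1 : Integrable (fun z : S × S => m1 ν φ z.1 * ψ z.1 z.2) (ν.prod ν) :=
    int_prod_mul_bdd ν (hm1φm.comp measurable_fst) hψm (fun z => hm1φb z.1) hψb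
  have iU2 : Integrable (fun z : S × S => m1 ν φ z.2 * ψ z.1 z.2) (ν.prod ν) :=
    int_prod_mul_bdd ν (hm1φm.comp measurable_snd) hψm (fun z => hm1φb z.2) hψb
  have iU3 : Integrable (fun z : S × S => mF ν φ * ψ z.1 z.2) (ν.prod ν) := by
    have hmFφb : |mF ν φ| ≤ Cφ := abs_le.2
      ⟨by linarith [mF_nonneg ν hφ0, mF_le ν hφm hφ0 hφC], mF_le ν hφm hφ0 hφC⟩
    exact int_prod_mul_bdd ν measurable_const hψm (fun _ => hmFφb) hψb
  have e2 : (fun z : S × S => tk ν φ z.1 z.2 * ψ z.1 z.2)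
      = fun z => ((φ z.1 z.2 * ψ z.1 z.2 - m1 ν φ z.1 * ψ z.1 z.2)
          - m1 ν φ z.2 * ψ z.1 z.2) + mF ν φ * ψ z.1 z.2 := by
    funext z; simp only [tk]; ring
  have t2a : ∫ z, m1 ν φ z.1 * ψ z.1 z.2 ∂(ν.prod ν)
      = ∫ p, m1 ν φ p * m1 ν ψ p ∂ν := by
    rw [integral_prod _ iU1]
    refine integral_congr_ae (Filter.Eventually.of_forall fun p => ?_)
    show ∫ q, m1 ν φ p * ψ p q ∂ν = m1 ν φ p * m1 ν ψ p
    rw [integral_const_mul]; rfl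
  have t2b : ∫ z, m1 ν φ z.2 * ψ z.1 z.2 ∂(ν.prod ν)
      = ∫ p, m1 ν φ p * m1 ν ψ p ∂ν := by
    rw [integral_prod _ iU2, integral_integral_swap iU2]
    refine integral_congr_ae (Filter.Eventually.of_forall fun q => ?_)
    show ∫ p, m1 ν φ q * ψ p q ∂ν = m1 ν φ q * m1 ν ψ q
    rw [integral_const_mul]
    have e : ∫ p, ψ p q ∂ν = m1 ν ψ q := by
      have : (fun p => ψ p q) = fun p => ψ q p := funext fun p => hψs p q
      rw [this]; rfl
    rw [e]
  have t2c : ∫ z, mF ν φ * ψ z.1 z.2 ∂(ν.prod ν) = mF ν φ * mF ν ψ := by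
    rw [integral_const_mul, mF_prod ν hψm hψ0 hψC]
  have j12 : Integrable (fun z : S × S =>
      φ z.1 z.2 * ψ z.1 z.2 - m1 ν φ z.1 * ψ z.1 z.2) (ν.prod ν) := by
    exact iφψ.sub iU1
  have j123 : Integrable (fun z : S × S =>
      φ z.1 z.2 * ψ z.1 z.2 - m1 ν φ z.1 * ψ z.1 z.2
        - m1 ν φ z.2 * ψ z.1 z.2) (ν.prod ν) := by
    exact j12.sub iU2
  rw [step1, e2, integral_add j123 iU3, integral_sub j12 iU2,
    integral_sub iφψ iU1, t2a, t2b, t2c]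
  ring


private lemma var_bound
    (hφm : Measurable (Function.uncurry φ)) (hφs : ∀ p q, φ p q = φ q p)
    (hφ0 : ∀ p q, 0 ≤ φ p q) (hφC : ∀ p q, φ p q ≤ Cφ) :
    ∫ z, tk ν φ z.1 z.2 * tk ν φ z.1 z.2 ∂(ν.prod ν) ≤ Cφ ^ 2 / 4 := by
  rw [expand_cross ν hφm hφm hφs hφs hφ0 hφ0 hφC hφC]
  have hm1φm := (m1_sm ν hφm).measurable
  have hb := m1_abs_le ν hφm hφ0 hφC
  have hφb : ∀ z : S × S, |φ z.1 z.2| ≤ Cφ := fun z =>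
    abs_le.2 ⟨by linarith [hφ0 z.1 z.2, hφC z.1 z.2], hφC z.1 z.2⟩
  have iφφ : Integrable (fun z : S × S => φ z.1 z.2 * φ z.1 z.2) (ν.prod ν) :=
    int_prod_mul_bdd ν hφm hφm hφb hφb
  have iCφ : Integrable (fun z : S × S => Cφ * φ z.1 z.2) (ν.prod ν) :=
    int_prod_mul_bdd ν measurable_const hφm
      (fun _ => le_abs_self _) hφb
  have h1 : ∫ z, φ z.1 z.2 * φ z.1 z.2 ∂(ν.prod ν) ≤ Cφ * mF ν φ := by
    calc ∫ z, φ z.1 z.2 * φ z.1 z.2 ∂(ν.prod ν)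
        ≤ ∫ z, Cφ * φ z.1 z.2 ∂(ν.prod ν) :=
          integral_mono iφφ iCφ (fun z =>
            mul_le_mul_of_nonneg_right (hφC z.1 z.2) (hφ0 z.1 z.2))
      _ = Cφ * mF ν φ := by rw [integral_const_mul, mF_prod ν hφm hφ0 hφC]
  have i_m1sq : Integrable (fun p => m1 ν φ p * m1 ν φ p) ν :=
    integrable_of_bdd (hm1φm.mul hm1φm).aestronglyMeasurable (C := Cφ * Cφ)
      (fun p => by rw [abs_mul]
                   exact mul_le_mul (hb p) (hb p) (abs_nonneg _) (le_trans (abs_nonneg _) (hb p)))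
  have h2 : (mF ν φ) ^ 2 ≤ ∫ p, m1 ν φ p * m1 ν φ p ∂ν := by
    have key : 0 ≤ ∫ p, (m1 ν φ p - mF ν φ) ^ 2 ∂ν := integral_nonneg (fun p => sq_nonneg _)
    have e : (fun p => (m1 ν φ p - mF ν φ) ^ 2)
        = fun p => (m1 ν φ p * m1 ν φ p - (2 * mF ν φ) * m1 ν φ p) + (mF ν φ) ^ 2 := by
      funext p; ring
    have i1 : Integrable (fun p => m1 ν φ p * m1 ν φ p - (2 * mF ν φ) * m1 ν φ p) ν := by
      exact i_m1sq.sub ((m1_int ν hφm hφ0 hφC).const_mul _)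
    have expand : ∫ p, (m1 ν φ p - mF ν φ) ^ 2 ∂ν
        = (∫ p, m1 ν φ p * m1 ν φ p ∂ν) - 2 * mF ν φ * mF ν φ + (mF ν φ) ^ 2 := by
      rw [e, integral_add i1 (integrable_const _),
        integral_sub i_m1sq ((m1_int ν hφm hφ0 hφC).const_mul _), integral_const_mul,
        integral_const]
      have : ∫ p, m1 ν φ p ∂ν = mF ν φ := rfl
      rw [this]; simp [measure_univ]
    nlinarith [key]
  have hF0 := mF_nonneg ν hφ0
  have hFC := mF_le ν hφm hφ0 hφC
  nlinarith [h1, h2, sq_nonneg (Cφ / 2 - mF ν φ)]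

private lemma core_bound
    (hφm : Measurable (Function.uncurry φ)) (hψm : Measurable (Function.uncurry ψ))
    (hφs : ∀ p q, φ p q = φ q p) (hψs : ∀ p q, ψ p q = ψ q p)
    (hφ0 : ∀ p q, 0 ≤ φ p q) (hψ0 : ∀ p q, 0 ≤ ψ p q)
    (hφC : ∀ p q, φ p q ≤ Cφ) (hψC : ∀ p q, ψ p q ≤ Cψ)
    (hCφ : 0 < Cφ) (hCψ : 0 < Cψ) :
    (∫ z, φ z.1 z.2 * ψ z.1 z.2 ∂(ν.prod ν))
      + (∫ z, φ z.1 z.2 ∂(ν.prod ν)) * (∫ z, ψ z.1 z.2 ∂(ν.prod ν))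
      - 2 * (∫ p, (∫ q, φ p q ∂ν) * (∫ q, ψ p q ∂ν) ∂ν)
      ≤ 1 / 4 * (Cφ * Cψ) := by
  have key := expand_cross ν hφm hψm hφs hψs hφ0 hψ0 hφC hψC
  set s : ℝ := Cψ / Cφ with hs
  have hspos : 0 < s := div_pos hCψ hCφ
  have htkmφ := tk_meas ν hφm
  have htkmψ := tk_meas ν hψm
  have htkbφ := tk_abs_le ν hφm hφ0 hφC
  have htkbψ := tk_abs_le ν hψm hψ0 hψC
  have iTT : Integrable (fun z : S × S => tk ν φ z.1 z.2 * tk ν ψ z.1 z.2) (ν.prod ν) :=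
    int_prod_mul_bdd ν htkmφ htkmψ (fun z => htkbφ z.1 z.2) (fun z => htkbψ z.1 z.2)
  have iφφT : Integrable (fun z : S × S => tk ν φ z.1 z.2 * tk ν φ z.1 z.2) (ν.prod ν) :=
    int_prod_mul_bdd ν htkmφ htkmφ (fun z => htkbφ z.1 z.2) (fun z => htkbφ z.1 z.2)
  have iψψT : Integrable (fun z : S × S => tk ν ψ z.1 z.2 * tk ν ψ z.1 z.2) (ν.prod ν) :=
    int_prod_mul_bdd ν htkmψ htkmψ (fun z => htkbψ z.1 z.2) (fun z => htkbψ z.1 z.2)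
  have iRHS : Integrable (fun z : S × S =>
      (s * (tk ν φ z.1 z.2 * tk ν φ z.1 z.2) + (tk ν ψ z.1 z.2 * tk ν ψ z.1 z.2) / s) / 2)
      (ν.prod ν) := by
    exact (((iφφT.const_mul s).add (iψψT.div_const s)).div_const 2)
  have pw : ∀ z : S × S, tk ν φ z.1 z.2 * tk ν ψ z.1 z.2
      ≤ (s * (tk ν φ z.1 z.2 * tk ν φ z.1 z.2) + (tk ν ψ z.1 z.2 * tk ν ψ z.1 z.2) / s) / 2 := by
    intro z
    set u := tk ν φ z.1 z.2; set v := tk ν ψ z.1 z.2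
    have hkey : (s * (u * u) + (v * v) / s) / 2 - u * v = (s * u - v) ^ 2 / (2 * s) := by
      field_simp; ring
    nlinarith [div_nonneg (sq_nonneg (s * u - v)) (le_of_lt (by linarith : (0:ℝ) < 2 * s))]
  have mono := integral_mono iTT iRHS pw
  have hsplit : ∫ z, (s * (tk ν φ z.1 z.2 * tk ν φ z.1 z.2)
        + (tk ν ψ z.1 z.2 * tk ν ψ z.1 z.2) / s) / 2 ∂(ν.prod ν)
      = (s * (∫ z, tk ν φ z.1 z.2 * tk ν φ z.1 z.2 ∂(ν.prod ν))
        + (∫ z, tk ν ψ z.1 z.2 * tk ν ψ z.1 z.2 ∂(ν.prod ν)) / s) / 2 := by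
    rw [integral_div, integral_add (iφφT.const_mul s) (iψψT.div_const s),
      integral_const_mul, integral_div]
  have hvarφ := var_bound ν hφm hφs hφ0 hφC
  have hvarψ := var_bound ν hψm hψs hψ0 hψC
  have hb1 : s * (∫ z, tk ν φ z.1 z.2 * tk ν φ z.1 z.2 ∂(ν.prod ν)) ≤ s * (Cφ ^ 2 / 4) :=
    mul_le_mul_of_nonneg_left hvarφ (le_of_lt hspos)
  have hb2 : (∫ z, tk ν ψ z.1 z.2 * tk ν ψ z.1 z.2 ∂(ν.prod ν)) / s ≤ (Cψ ^ 2 / 4) / s :=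
    (div_le_div_iff_of_pos_right hspos).mpr hvarψ
  have hval : (s * (Cφ ^ 2 / 4) + (Cψ ^ 2 / 4) / s) / 2 = 1 / 4 * (Cφ * Cψ) := by
    rw [hs]; field_simp; ring
  have hgoal : (∫ p, (∫ q, φ p q ∂ν) * (∫ q, ψ p q ∂ν) ∂ν)
      = ∫ p, m1 ν φ p * m1 ν ψ p ∂ν := rfl
  rw [mF_prod ν hφm hφ0 hφC, mF_prod ν hψm hψ0 hψC, hgoal]
  linarith [key, mono, hsplit, hb1, hb2, hval]

end Core

private lemma euclid_norm_le {n : ℕ} {a b : ℝ} (hab : a ≤ b) (x y : EuclideanSpace ℝ (Fin n))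
    (hx : ∀ i, x i ∈ Set.Icc a b) (hy : ∀ i, y i ∈ Set.Icc a b) :
    ‖x - y‖ ≤ (b - a) * Real.sqrt n := by
  rw [EuclideanSpace.norm_eq]
  have hb : ∀ i, ‖(x - y) i‖ ^ 2 ≤ (b - a) ^ 2 := by
    intro i
    have h1 := hx i; have h2 := hy i
    rw [Set.mem_Icc] at h1 h2
    have e : (x - y) i = x i - y i := rfl
    rw [e, Real.norm_eq_abs, sq_abs]
    nlinarith [h1.1, h1.2, h2.1, h2.2]
  calc Real.sqrt (∑ i, ‖(x - y) i‖ ^ 2)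
      ≤ Real.sqrt (∑ _i : Fin n, (b - a) ^ 2) :=
        Real.sqrt_le_sqrt (Finset.sum_le_sum fun i _ => hb i)
    _ = (b - a) * Real.sqrt n := by
        rw [Finset.sum_const, Finset.card_univ, Fintype.card_fin, nsmul_eq_mul,
          Real.sqrt_mul (Nat.cast_nonneg n), Real.sqrt_sq (by linarith)]
        ring

/-- Main theorem: for iid pairs `(X,Y)`, `(X',Y')`, `(X'',Y'')` with `X` taking values in
`[a,b]^N` and `Y` in `[c,d]^M`, the distance covariance satisfies
`dCov(X,Y) ≤ (1/2)·√((b−a)(d−c)·√(N·M))`; equivalently,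
`dCov²(X,Y) ≤ (1/4)·(b−a)(d−c)·√(N·M)`, where
`dCov²(X,Y) = E[‖X−X'‖‖Y−Y'‖] + E[‖X−X'‖]E[‖Y−Y'‖] − E[‖X−X'‖‖Y−Y''‖] − E[‖X−X''‖‖Y−Y'‖]`
and `dCov(X,Y)` is its nonnegative square root. -/
theorem dCov_le_of_bounded
    {Ω : Type*} [MeasurableSpace Ω] (μ : Measure Ω) [IsProbabilityMeasure μ]
    (a b c d : ℝ) (hab : a ≤ b) (hcd : c ≤ d)
    (N M : ℕ) (hN : 1 ≤ N) (hM : 1 ≤ M)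
    (X X' X'' : Ω → EuclideanSpace ℝ (Fin N))
    (Y Y' Y'' : Ω → EuclideanSpace ℝ (Fin M))
    (hXm : Measurable X) (hX'm : Measurable X') (hX''m : Measurable X'')
    (hYm : Measurable Y) (hY'm : Measurable Y') (hY''m : Measurable Y'')
    (hindep : iIndepFun
      ![fun ω => (X ω, Y ω), fun ω => (X' ω, Y' ω), fun ω => (X'' ω, Y'' ω)] μ)
    (hid1 : IdentDistrib (fun ω => (X ω, Y ω)) (fun ω => (X' ω, Y' ω)) μ μ)
    (hid2 : IdentDistrib (fun ω => (X ω, Y ω)) (fun ω => (X'' ω, Y'' ω)) μ μ)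
    (hXab : ∀ᵐ ω ∂μ, ∀ i, X ω i ∈ Set.Icc a b)
    (hX'ab : ∀ᵐ ω ∂μ, ∀ i, X' ω i ∈ Set.Icc a b)
    (hX''ab : ∀ᵐ ω ∂μ, ∀ i, X'' ω i ∈ Set.Icc a b)
    (hYcd : ∀ᵐ ω ∂μ, ∀ i, Y ω i ∈ Set.Icc c d)
    (hY'cd : ∀ᵐ ω ∂μ, ∀ i, Y' ω i ∈ Set.Icc c d)
    (hY''cd : ∀ᵐ ω ∂μ, ∀ i, Y'' ω i ∈ Set.Icc c d) :
    Real.sqrt ((∫ ω, ‖X ω - X' ω‖ * ‖Y ω - Y' ω‖ ∂μ)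
          + (∫ ω, ‖X ω - X' ω‖ ∂μ) * (∫ ω, ‖Y ω - Y' ω‖ ∂μ)
          - (∫ ω, ‖X ω - X' ω‖ * ‖Y ω - Y'' ω‖ ∂μ)
          - (∫ ω, ‖X ω - X'' ω‖ * ‖Y ω - Y' ω‖ ∂μ))
        ≤ (1 / 2) * Real.sqrt ((b - a) * (d - c) * Real.sqrt ((N : ℝ) * M))
      ∧ (∫ ω, ‖X ω - X' ω‖ * ‖Y ω - Y' ω‖ ∂μ)
          + (∫ ω, ‖X ω - X' ω‖ ∂μ) * (∫ ω, ‖Y ω - Y' ω‖ ∂μ)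
          - (∫ ω, ‖X ω - X' ω‖ * ‖Y ω - Y'' ω‖ ∂μ)
          - (∫ ω, ‖X ω - X'' ω‖ * ‖Y ω - Y' ω‖ ∂μ)
        ≤ (1 / 4) * ((b - a) * (d - c)) * Real.sqrt ((N : ℝ) * M) := by
  suffices h2 : (∫ ω, ‖X ω - X' ω‖ * ‖Y ω - Y' ω‖ ∂μ)
          + (∫ ω, ‖X ω - X' ω‖ ∂μ) * (∫ ω, ‖Y ω - Y' ω‖ ∂μ)
          - (∫ ω, ‖X ω - X' ω‖ * ‖Y ω - Y'' ω‖ ∂μ)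
          - (∫ ω, ‖X ω - X'' ω‖ * ‖Y ω - Y' ω‖ ∂μ)
        ≤ (1 / 4) * ((b - a) * (d - c)) * Real.sqrt ((N : ℝ) * M) by
    refine ⟨?_, h2⟩
    have h3 := Real.sqrt_le_sqrt h2
    refine h3.trans (le_of_eq ?_)
    rw [show (1 / 4 : ℝ) * ((b - a) * (d - c)) * Real.sqrt ((N : ℝ) * M)
        = (1 / 2) ^ 2 * ((b - a) * (d - c) * Real.sqrt ((N : ℝ) * M)) by ring,
      Real.sqrt_mul (by positivity), Real.sqrt_sq (by norm_num)]
  -- degenerate case a = b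
  rcases eq_or_lt_of_le hab with hba | hba
  · have hX0 : ∀ᵐ ω ∂μ, ‖X ω - X' ω‖ = 0 := by
      filter_upwards [hXab, hX'ab] with ω h1 h2
      have : X ω = X' ω := by
        ext i
        have e1 := h1 i; have e2 := h2 i
        rw [← hba, Set.Icc_self, Set.mem_singleton_iff] at e1 e2
        rw [e1, e2]
      rw [this, sub_self, norm_zero]
    have z1 : ∫ ω, ‖X ω - X' ω‖ * ‖Y ω - Y' ω‖ ∂μ = 0 := by
      rw [← integral_zero Ω ℝ (μ := μ)]
      refine integral_congr_ae ?_
      filter_upwards [hX0] with ω h; rw [h, zero_mul]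
    have z2 : ∫ ω, ‖X ω - X' ω‖ ∂μ = 0 := by
      rw [← integral_zero Ω ℝ (μ := μ)]
      exact integral_congr_ae hX0
    have z3 : ∫ ω, ‖X ω - X' ω‖ * ‖Y ω - Y'' ω‖ ∂μ = 0 := by
      rw [← integral_zero Ω ℝ (μ := μ)]
      refine integral_congr_ae ?_
      filter_upwards [hX0] with ω h; rw [h, zero_mul]
    have hX0' : ∀ᵐ ω ∂μ, ‖X ω - X'' ω‖ = 0 := by
      filter_upwards [hXab, hX''ab] with ω h1 h2
      have : X ω = X'' ω := by
        ext i
        have e1 := h1 i; have e2 := h2 i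
        rw [← hba, Set.Icc_self, Set.mem_singleton_iff] at e1 e2
        rw [e1, e2]
      rw [this, sub_self, norm_zero]
    have z4 : ∫ ω, ‖X ω - X'' ω‖ * ‖Y ω - Y' ω‖ ∂μ = 0 := by
      rw [← integral_zero Ω ℝ (μ := μ)]
      refine integral_congr_ae ?_
      filter_upwards [hX0'] with ω h; rw [h, zero_mul]
    rw [z1, z2, z3, z4, ← hba]
    have : Real.sqrt ((N : ℝ) * M) ≥ 0 := Real.sqrt_nonneg _
    nlinarith
  rcases eq_or_lt_of_le hcd with hdc | hdc
  · have hY0 : ∀ᵐ ω ∂μ, ‖Y ω - Y' ω‖ = 0 := by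
      filter_upwards [hYcd, hY'cd] with ω h1 h2
      have : Y ω = Y' ω := by
        ext i
        have e1 := h1 i; have e2 := h2 i
        rw [← hdc, Set.Icc_self, Set.mem_singleton_iff] at e1 e2
        rw [e1, e2]
      rw [this, sub_self, norm_zero]
    have hY0' : ∀ᵐ ω ∂μ, ‖Y ω - Y'' ω‖ = 0 := by
      filter_upwards [hYcd, hY''cd] with ω h1 h2
      have : Y ω = Y'' ω := by
        ext i
        have e1 := h1 i; have e2 := h2 i
        rw [← hdc, Set.Icc_self, Set.mem_singleton_iff] at e1 e2
        rw [e1, e2]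
      rw [this, sub_self, norm_zero]
    have z1 : ∫ ω, ‖X ω - X' ω‖ * ‖Y ω - Y' ω‖ ∂μ = 0 := by
      rw [← integral_zero Ω ℝ (μ := μ)]
      refine integral_congr_ae ?_
      filter_upwards [hY0] with ω h; rw [h, mul_zero]
    have z2 : ∫ ω, ‖Y ω - Y' ω‖ ∂μ = 0 := by
      rw [← integral_zero Ω ℝ (μ := μ)]
      exact integral_congr_ae hY0
    have z3 : ∫ ω, ‖X ω - X' ω‖ * ‖Y ω - Y'' ω‖ ∂μ = 0 := by
      rw [← integral_zero Ω ℝ (μ := μ)]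
      refine integral_congr_ae ?_
      filter_upwards [hY0'] with ω h; rw [h, mul_zero]
    have z4 : ∫ ω, ‖X ω - X'' ω‖ * ‖Y ω - Y' ω‖ ∂μ = 0 := by
      rw [← integral_zero Ω ℝ (μ := μ)]
      refine integral_congr_ae ?_
      filter_upwards [hY0] with ω h; rw [h, mul_zero]
    rw [z1, z2, z3, z4, ← hdc]
    have : Real.sqrt ((N : ℝ) * M) ≥ 0 := Real.sqrt_nonneg _
    nlinarith
  -- main case: a < b, c < d
  have hNpos : (0:ℝ) < Real.sqrt N :=
    Real.sqrt_pos.2 (by exact_mod_cast Nat.pos_of_ne_zero (by omega))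
  have hMpos : (0:ℝ) < Real.sqrt M :=
    Real.sqrt_pos.2 (by exact_mod_cast Nat.pos_of_ne_zero (by omega))
  set Dx : ℝ := (b - a) * Real.sqrt N with hDxdef
  set Dy : ℝ := (d - c) * Real.sqrt M with hDydef
  have hDxpos : 0 < Dx := mul_pos (by linarith) hNpos
  have hDypos : 0 < Dy := mul_pos (by linarith) hMpos
  have hZ0m : Measurable (fun ω => (X ω, Y ω)) := hXm.prodMk hYm
  have hZ1m : Measurable (fun ω => (X' ω, Y' ω)) := hX'm.prodMk hY'm
  have hZ2m : Measurable (fun ω => (X'' ω, Y'' ω)) := hX''m.prodMk hY''m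
  set ν := μ.map (fun ω => (X ω, Y ω)) with hν
  haveI : IsProbabilityMeasure ν := Measure.isProbabilityMeasure_map hZ0m.aemeasurable
  obtain ⟨φ, hφm, hφs, hφ0, hφC, hφval⟩ :
      ∃ φ : (EuclideanSpace ℝ (Fin N) × EuclideanSpace ℝ (Fin M)) →
        (EuclideanSpace ℝ (Fin N) × EuclideanSpace ℝ (Fin M)) → ℝ,
        Measurable (Function.uncurry φ) ∧ (∀ p q, φ p q = φ q p) ∧ (∀ p q, 0 ≤ φ p q)
          ∧ (∀ p q, φ p q ≤ Dx) ∧ ∀ p q, ‖p.1 - q.1‖ ≤ Dx → φ p q = ‖p.1 - q.1‖ := by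
    refine ⟨fun p q => min ‖p.1 - q.1‖ Dx,
      ((measurable_fst.fst.sub measurable_snd.fst).norm).min measurable_const,
      fun p q => by show min ‖p.1 - q.1‖ Dx = min ‖q.1 - p.1‖ Dx; rw [norm_sub_rev],
      fun p q => le_min (norm_nonneg _) hDxpos.le,
      fun p q => min_le_right _ _, fun p q h => min_eq_left h⟩
  obtain ⟨ψ, hψm, hψs, hψ0, hψC, hψval⟩ :
      ∃ ψ : (EuclideanSpace ℝ (Fin N) × EuclideanSpace ℝ (Fin M)) →
        (EuclideanSpace ℝ (Fin N) × EuclideanSpace ℝ (Fin M)) → ℝ,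
        Measurable (Function.uncurry ψ) ∧ (∀ p q, ψ p q = ψ q p) ∧ (∀ p q, 0 ≤ ψ p q)
          ∧ (∀ p q, ψ p q ≤ Dy) ∧ ∀ p q, ‖p.2 - q.2‖ ≤ Dy → ψ p q = ‖p.2 - q.2‖ := by
    refine ⟨fun p q => min ‖p.2 - q.2‖ Dy,
      ((measurable_fst.snd.sub measurable_snd.snd).norm).min measurable_const,
      fun p q => by show min ‖p.2 - q.2‖ Dy = min ‖q.2 - p.2‖ Dy; rw [norm_sub_rev],
      fun p q => le_min (norm_nonneg _) hDypos.le,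
      fun p q => min_le_right _ _, fun p q h => min_eq_left h⟩
  -- independence / law facts
  have hmeas3 : ∀ i, Measurable (![fun ω => (X ω, Y ω), fun ω => (X' ω, Y' ω),
      fun ω => (X'' ω, Y'' ω)] i) := by
    intro i
    fin_cases i
    · exact hZ0m
    · exact hZ1m
    · exact hZ2m
  have hI01 : IndepFun (fun ω => (X ω, Y ω)) (fun ω => (X' ω, Y' ω)) μ :=
    hindep.indepFun (by decide : (0 : Fin 3) ≠ 1)
  have hI12 : IndepFun (fun ω => (X' ω, Y' ω)) (fun ω => (X'' ω, Y'' ω)) μ :=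
    hindep.indepFun (by decide : (1 : Fin 3) ≠ 2)
  have hmap1 : μ.map (fun ω => (X' ω, Y' ω)) = ν := by rw [hν, hid1.map_eq]
  have hmap2 : μ.map (fun ω => (X'' ω, Y'' ω)) = ν := by rw [hν, hid2.map_eq]
  have h01 : μ.map (fun ω => ((X ω, Y ω), (X' ω, Y' ω))) = ν.prod ν := by
    rw [(indepFun_iff_map_prod_eq_prod_map_map hZ0m.aemeasurable
      hZ1m.aemeasurable).mp hI01, hmap1, ← hν]
  have h12 : μ.map (fun ω => ((X' ω, Y' ω), (X'' ω, Y'' ω))) = ν.prod ν := by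
    rw [(indepFun_iff_map_prod_eq_prod_map_map hZ1m.aemeasurable
      hZ2m.aemeasurable).mp hI12, hmap1, hmap2]
  have hI012 : IndepFun (fun ω => (X ω, Y ω))
      (fun ω => ((X' ω, Y' ω), (X'' ω, Y'' ω))) μ :=
    (hindep.indepFun_prodMk hmeas3 1 2 0 (by decide) (by decide)).symm
  have hQ : μ.map (fun ω => ((X ω, Y ω), ((X' ω, Y' ω), (X'' ω, Y'' ω))))
      = ν.prod (ν.prod ν) := by
    rw [(indepFun_iff_map_prod_eq_prod_map_map hZ0m.aemeasurable
      (hZ1m.prodMk hZ2m).aemeasurable).mp hI012, h12, ← hν]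
  -- a.e. bounds
  have hbX1 : ∀ᵐ ω ∂μ, ‖X ω - X' ω‖ ≤ Dx := by
    filter_upwards [hXab, hX'ab] with ω h1 h2 using euclid_norm_le hab _ _ h1 h2
  have hbX2 : ∀ᵐ ω ∂μ, ‖X ω - X'' ω‖ ≤ Dx := by
    filter_upwards [hXab, hX''ab] with ω h1 h2 using euclid_norm_le hab _ _ h1 h2
  have hbY1 : ∀ᵐ ω ∂μ, ‖Y ω - Y' ω‖ ≤ Dy := by
    filter_upwards [hYcd, hY'cd] with ω h1 h2 using euclid_norm_le hcd _ _ h1 h2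
  have hbY2 : ∀ᵐ ω ∂μ, ‖Y ω - Y'' ω‖ ≤ Dy := by
    filter_upwards [hYcd, hY''cd] with ω h1 h2 using euclid_norm_le hcd _ _ h1 h2
  have hfm1 : Measurable (fun z : (EuclideanSpace ℝ (Fin N) × EuclideanSpace ℝ (Fin M)) ×
      (EuclideanSpace ℝ (Fin N) × EuclideanSpace ℝ (Fin M)) => φ z.1 z.2 * ψ z.1 z.2) :=
    hφm.mul hψm
  have hfm2 : Measurable (fun z : (EuclideanSpace ℝ (Fin N) × EuclideanSpace ℝ (Fin M)) ×
      (EuclideanSpace ℝ (Fin N) × EuclideanSpace ℝ (Fin M)) => φ z.1 z.2) := hφm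
  have hfm3 : Measurable (fun z : (EuclideanSpace ℝ (Fin N) × EuclideanSpace ℝ (Fin M)) ×
      (EuclideanSpace ℝ (Fin N) × EuclideanSpace ℝ (Fin M)) => ψ z.1 z.2) := hψm
  -- transfer of the four integrals
  have T1 : ∫ ω, ‖X ω - X' ω‖ * ‖Y ω - Y' ω‖ ∂μ
      = ∫ z, φ z.1 z.2 * ψ z.1 z.2 ∂(ν.prod ν) := by
    rw [← h01, integral_map (hZ0m.prodMk hZ1m).aemeasurable
      hfm1.aestronglyMeasurable]
    refine integral_congr_ae ?_
    filter_upwards [hbX1, hbY1] with ω h1 h2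
    show ‖X ω - X' ω‖ * ‖Y ω - Y' ω‖ = φ (X ω, Y ω) (X' ω, Y' ω) * ψ (X ω, Y ω) (X' ω, Y' ω)
    rw [hφval (X ω, Y ω) (X' ω, Y' ω) h1, hψval (X ω, Y ω) (X' ω, Y' ω) h2]
  have T2a : ∫ ω, ‖X ω - X' ω‖ ∂μ = ∫ z, φ z.1 z.2 ∂(ν.prod ν) := by
    rw [← h01, integral_map (hZ0m.prodMk hZ1m).aemeasurable hfm2.aestronglyMeasurable]
    refine integral_congr_ae ?_
    filter_upwards [hbX1] with ω h1
    show ‖X ω - X' ω‖ = φ (X ω, Y ω) (X' ω, Y' ω)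
    rw [hφval (X ω, Y ω) (X' ω, Y' ω) h1]
  have T2b : ∫ ω, ‖Y ω - Y' ω‖ ∂μ = ∫ z, ψ z.1 z.2 ∂(ν.prod ν) := by
    rw [← h01, integral_map (hZ0m.prodMk hZ1m).aemeasurable hfm3.aestronglyMeasurable]
    refine integral_congr_ae ?_
    filter_upwards [hbY1] with ω h1
    show ‖Y ω - Y' ω‖ = ψ (X ω, Y ω) (X' ω, Y' ω)
    rw [hψval (X ω, Y ω) (X' ω, Y' ω) h1]
  -- the two three-variable terms
  have hH3m : Measurable (fun z : (EuclideanSpace ℝ (Fin N) × EuclideanSpace ℝ (Fin M)) ×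
      ((EuclideanSpace ℝ (Fin N) × EuclideanSpace ℝ (Fin M)) ×
        (EuclideanSpace ℝ (Fin N) × EuclideanSpace ℝ (Fin M))) =>
      φ z.1 z.2.1 * ψ z.1 z.2.2) :=
    (hφm.comp (measurable_fst.prodMk measurable_snd.fst)).mul
      (hψm.comp (measurable_fst.prodMk measurable_snd.snd))
  have hH4m : Measurable (fun z : (EuclideanSpace ℝ (Fin N) × EuclideanSpace ℝ (Fin M)) ×
      ((EuclideanSpace ℝ (Fin N) × EuclideanSpace ℝ (Fin M)) ×
        (EuclideanSpace ℝ (Fin N) × EuclideanSpace ℝ (Fin M))) =>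
      φ z.1 z.2.2 * ψ z.1 z.2.1) :=
    (hφm.comp (measurable_fst.prodMk measurable_snd.snd)).mul
      (hψm.comp (measurable_fst.prodMk measurable_snd.fst))
  have habs : ∀ (u v : ℝ), 0 ≤ u → u ≤ Dx → 0 ≤ v → v ≤ Dy → |u * v| ≤ Dx * Dy := by
    intro u v h1 h2 h3 h4
    rw [abs_mul, abs_of_nonneg h1, abs_of_nonneg h3]
    exact mul_le_mul h2 h4 h3 hDxpos.le
  have hint3 : Integrable (fun z : (EuclideanSpace ℝ (Fin N) × EuclideanSpace ℝ (Fin M)) ×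
      ((EuclideanSpace ℝ (Fin N) × EuclideanSpace ℝ (Fin M)) ×
        (EuclideanSpace ℝ (Fin N) × EuclideanSpace ℝ (Fin M))) =>
      φ z.1 z.2.1 * ψ z.1 z.2.2) (ν.prod (ν.prod ν)) :=
    integrable_of_bdd hH3m.aestronglyMeasurable (C := Dx * Dy)
      (fun z => habs _ _ (hφ0 _ _) (hφC _ _) (hψ0 _ _) (hψC _ _))
  have hint4 : Integrable (fun z : (EuclideanSpace ℝ (Fin N) × EuclideanSpace ℝ (Fin M)) ×
      ((EuclideanSpace ℝ (Fin N) × EuclideanSpace ℝ (Fin M)) ×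
        (EuclideanSpace ℝ (Fin N) × EuclideanSpace ℝ (Fin M))) =>
      φ z.1 z.2.2 * ψ z.1 z.2.1) (ν.prod (ν.prod ν)) :=
    integrable_of_bdd hH4m.aestronglyMeasurable (C := Dx * Dy)
      (fun z => habs _ _ (hφ0 _ _) (hφC _ _) (hψ0 _ _) (hψC _ _))
  have T3 : ∫ ω, ‖X ω - X' ω‖ * ‖Y ω - Y'' ω‖ ∂μ
      = ∫ p, (∫ q, φ p q ∂ν) * (∫ q, ψ p q ∂ν) ∂ν := by
    have e1 : ∫ ω, ‖X ω - X' ω‖ * ‖Y ω - Y'' ω‖ ∂μ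
        = ∫ z, φ z.1 z.2.1 * ψ z.1 z.2.2 ∂(ν.prod (ν.prod ν)) := by
      rw [← hQ, integral_map (hZ0m.prodMk (hZ1m.prodMk hZ2m)).aemeasurable
        hH3m.aestronglyMeasurable]
      refine integral_congr_ae ?_
      filter_upwards [hbX1, hbY2] with ω h1 h2
      show ‖X ω - X' ω‖ * ‖Y ω - Y'' ω‖ = φ (X ω, Y ω) (X' ω, Y' ω) * ψ (X ω, Y ω) (X'' ω, Y'' ω)
      rw [hφval (X ω, Y ω) (X' ω, Y' ω) h1, hψval (X ω, Y ω) (X'' ω, Y'' ω) h2]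
    rw [e1, integral_prod _ hint3]
    refine integral_congr_ae (Filter.Eventually.of_forall fun p => ?_)
    show ∫ w, φ p w.1 * ψ p w.2 ∂(ν.prod ν) = (∫ q, φ p q ∂ν) * (∫ q, ψ p q ∂ν)
    exact integral_prod_mul (φ p) (ψ p)
  have T4 : ∫ ω, ‖X ω - X'' ω‖ * ‖Y ω - Y' ω‖ ∂μ
      = ∫ p, (∫ q, φ p q ∂ν) * (∫ q, ψ p q ∂ν) ∂ν := by
    have e1 : ∫ ω, ‖X ω - X'' ω‖ * ‖Y ω - Y' ω‖ ∂μ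
        = ∫ z, φ z.1 z.2.2 * ψ z.1 z.2.1 ∂(ν.prod (ν.prod ν)) := by
      rw [← hQ, integral_map (hZ0m.prodMk (hZ1m.prodMk hZ2m)).aemeasurable
        hH4m.aestronglyMeasurable]
      refine integral_congr_ae ?_
      filter_upwards [hbX2, hbY1] with ω h1 h2
      show ‖X ω - X'' ω‖ * ‖Y ω - Y' ω‖ = φ (X ω, Y ω) (X'' ω, Y'' ω) * ψ (X ω, Y ω) (X' ω, Y' ω)
      rw [hφval (X ω, Y ω) (X'' ω, Y'' ω) h1, hψval (X ω, Y ω) (X' ω, Y' ω) h2]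
    rw [e1, integral_prod _ hint4]
    refine integral_congr_ae (Filter.Eventually.of_forall fun p => ?_)
    show ∫ w, φ p w.2 * ψ p w.1 ∂(ν.prod ν) = (∫ q, φ p q ∂ν) * (∫ q, ψ p q ∂ν)
    have e2 : (fun w : (EuclideanSpace ℝ (Fin N) × EuclideanSpace ℝ (Fin M)) ×
        (EuclideanSpace ℝ (Fin N) × EuclideanSpace ℝ (Fin M)) => φ p w.2 * ψ p w.1)
        = fun w => ψ p w.1 * φ p w.2 := by funext w; ring
    rw [e2, integral_prod_mul (ψ p) (φ p), mul_comm]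
  have hcore := core_bound ν hφm hψm hφs hψs hφ0 hψ0 hφC hψC hDxpos hDypos
  have hDD : (1 / 4 : ℝ) * ((b - a) * (d - c)) * Real.sqrt ((N : ℝ) * M)
      = 1 / 4 * (Dx * Dy) := by
    rw [hDxdef, hDydef, Real.sqrt_mul (Nat.cast_nonneg N)]; ring
  rw [T1, T2a, T2b, T3, T4, hDD]
  linarith [hcore]
end

section
/- Corollary: Let (X,Y), (X',Y'), (X'',Y'') be iid pairs of random vectors, with X taking values in [a,a+1]^N ⊆ ℝ^N and Y taking values in [c,c+1]^N ⊆ ℝ^N, for real numbers a, c and a natural number N ≥ 1. Then dCov(X,Y) ≤ √N/2. Equivalently, dCov²(X,Y) ≤ N/4. -/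
open MeasureTheory ProbabilityTheory

section Helpers

variable {W : Type*} [MeasurableSpace W] {ρ : Measure W} [IsProbabilityMeasure ρ]

/-- Integrability from an a.e. bound on a probability space. -/
lemma dc_int_of_bound {h : W → ℝ} (hm : AEStronglyMeasurable h ρ) {C : ℝ}
    (hb : ∀ᵐ x ∂ρ, |h x| ≤ C) : Integrable h ρ :=
  Integrable.mono' (integrable_const C) hm (by simpa [Real.norm_eq_abs] using hb)

/-- Expansion of a product of shifted functions. -/
lemma dc_expand (φ ψ : W → ℝ) (A B : ℝ) (hφ : Integrable φ ρ) (hψ : Integrable ψ ρ)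
    (hφψ : Integrable (fun x => φ x * ψ x) ρ) :
    ∫ x, (φ x + A) * (ψ x + B) ∂ρ
      = (∫ x, φ x * ψ x ∂ρ) + A * (∫ x, ψ x ∂ρ) + B * (∫ x, φ x ∂ρ) + A * B := by
  have h1 : (fun x => (φ x + A) * (ψ x + B))
      = fun x => φ x * ψ x + (A * ψ x + (B * φ x + A * B)) := by funext x; ring
  have i1 : Integrable (fun x => B * φ x + A * B) ρ := (hφ.const_mul B).add (integrable_const _)
  have i2 : Integrable (fun x => A * ψ x + (B * φ x + A * B)) ρ := (hψ.const_mul A).add i1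
  rw [h1, integral_add hφψ i2, integral_add (hψ.const_mul A) i1,
    integral_add (hφ.const_mul B) (integrable_const _), integral_const,
    integral_const_mul, integral_const_mul]
  simp [measure_univ]
  ring

/-- Full-measure sets lift to the product. -/
lemma dc_prodS2 {W1 W2 : Type*} [MeasurableSpace W1] [MeasurableSpace W2]
    {ρ1 : Measure W1} {ρ2 : Measure W2} [IsProbabilityMeasure ρ1] [IsProbabilityMeasure ρ2]
    {S1 : Set W1} {S2 : Set W2} (h1m : MeasurableSet S1) (h2m : MeasurableSet S2)
    (h1 : ∀ᵐ p ∂ρ1, p ∈ S1) (h2 : ∀ᵐ p ∂ρ2, p ∈ S2) :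
    ∀ᵐ z ∂ρ1.prod ρ2, z.1 ∈ S1 ∧ z.2 ∈ S2 := by
  have hρ1 : ρ1 S1 = 1 := by
    rw [← prob_compl_eq_zero_iff h1m]
    have := h1; rw [ae_iff] at this; simpa [Set.compl_def] using this
  have hρ2 : ρ2 S2 = 1 := by
    rw [← prob_compl_eq_zero_iff h2m]
    have := h2; rw [ae_iff] at this; simpa [Set.compl_def] using this
  have hfull : (ρ1.prod ρ2) ((S1 ×ˢ S2)ᶜ) = 0 := by
    have hm : MeasurableSet (S1 ×ˢ S2) := h1m.prod h2m
    have hone : (ρ1.prod ρ2) (S1 ×ˢ S2) = 1 := by rw [Measure.prod_prod, hρ1, hρ2, one_mul]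
    rw [measure_compl hm (measure_ne_top _ _), hone]
    simp [measure_univ]
  rw [ae_iff]
  refine measure_mono_null ?_ hfull
  intro z hz
  simp only [Set.mem_setOf_eq, not_and_or] at hz
  simp only [Set.mem_compl_iff, Set.mem_prod, not_and_or]
  exact hz

/-- Full-measure set lifts to the product. -/
lemma dc_prodS {W : Type*} [MeasurableSpace W] {ρ : Measure W} [IsProbabilityMeasure ρ]
    {S : Set W} (hSm : MeasurableSet S) (hS : ∀ᵐ p ∂ρ, p ∈ S) :
    ∀ᵐ z ∂ρ.prod ρ, z.1 ∈ S ∧ z.2 ∈ S := dc_prodS2 hSm hSm hS hS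

variable {f : W → W → ℝ} {S : Set W} {D : ℝ}

lemma dc_sliceInt (hfm : StronglyMeasurable fun z : W × W => f z.1 z.2)
    (hf0 : ∀ p q, 0 ≤ f p q) (hS : ∀ᵐ p ∂ρ, p ∈ S)
    (hfb : ∀ p ∈ S, ∀ q ∈ S, f p q ≤ D) {p : W} (hp : p ∈ S) :
    Integrable (fun q => f p q) ρ := by
  have hsm : AEStronglyMeasurable (fun q => f p q) ρ :=
    (hfm.comp_measurable (measurable_prodMk_left (x := p))).aestronglyMeasurable
  apply dc_int_of_bound hsm
  filter_upwards [hS] with q hq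
  rw [abs_of_nonneg (hf0 _ _)]
  exact hfb p hp q hq

lemma dc_m_le (hfm : StronglyMeasurable fun z : W × W => f z.1 z.2)
    (hf0 : ∀ p q, 0 ≤ f p q) (hS : ∀ᵐ p ∂ρ, p ∈ S)
    (hfb : ∀ p ∈ S, ∀ q ∈ S, f p q ≤ D) {p : W} (hp : p ∈ S) :
    (∫ q, f p q ∂ρ) ≤ D := by
  calc ∫ q, f p q ∂ρ ≤ ∫ _q, D ∂ρ :=
        integral_mono_ae (dc_sliceInt hfm hf0 hS hfb hp) (integrable_const D)
          (hS.mono fun q hq => hfb p hp q hq)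
    _ = D := by simp [measure_univ]

lemma dc_m_meas (hfm : StronglyMeasurable fun z : W × W => f z.1 z.2) :
    StronglyMeasurable (fun p => ∫ q, f p q ∂ρ) := hfm.integral_prod_right'

lemma dc_m_int (hfm : StronglyMeasurable fun z : W × W => f z.1 z.2)
    (hf0 : ∀ p q, 0 ≤ f p q) (hS : ∀ᵐ p ∂ρ, p ∈ S)
    (hfb : ∀ p ∈ S, ∀ q ∈ S, f p q ≤ D) :
    Integrable (fun p => ∫ q, f p q ∂ρ) ρ := by
  apply dc_int_of_bound (dc_m_meas hfm).aestronglyMeasurable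
  filter_upwards [hS] with p hp
  rw [abs_of_nonneg (integral_nonneg fun q => hf0 p q)]
  exact dc_m_le hfm hf0 hS hfb hp

lemma dc_intF (hfm : StronglyMeasurable fun z : W × W => f z.1 z.2)
    (hf0 : ∀ p q, 0 ≤ f p q) (hSm : MeasurableSet S) (hS : ∀ᵐ p ∂ρ, p ∈ S)
    (hfb : ∀ p ∈ S, ∀ q ∈ S, f p q ≤ D)
    (hprodS : ∀ᵐ z ∂ρ.prod ρ, z.1 ∈ S ∧ z.2 ∈ S) :
    Integrable (fun z : W × W => f z.1 z.2) (ρ.prod ρ) := by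
  apply dc_int_of_bound hfm.aestronglyMeasurable (C := D)
  filter_upwards [hprodS] with z hz
  rw [abs_of_nonneg (hf0 _ _)]
  exact hfb _ hz.1 _ hz.2


end Helpers


/-- Key identity: the doubly-centered expansion of the distance covariance. -/
lemma dc_aux {W : Type*} [MeasurableSpace W] {ρ : Measure W} [IsProbabilityMeasure ρ]
    (f g : W → W → ℝ) (S : Set W) (D : ℝ)
    (hfm : StronglyMeasurable fun z : W × W => f z.1 z.2)
    (hgm : StronglyMeasurable fun z : W × W => g z.1 z.2)
    (hfs : ∀ p q, f p q = f q p) (hgs : ∀ p q, g p q = g q p)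
    (hf0 : ∀ p q, 0 ≤ f p q) (hg0 : ∀ p q, 0 ≤ g p q)
    (hSm : MeasurableSet S) (hS : ∀ᵐ p ∂ρ, p ∈ S)
    (hfb : ∀ p ∈ S, ∀ q ∈ S, f p q ≤ D) (hgb : ∀ p ∈ S, ∀ q ∈ S, g p q ≤ D)
    (m n : W → ℝ) (M M' : ℝ)
    (hm : m = fun p => ∫ q, f p q ∂ρ) (hn : n = fun p => ∫ q, g p q ∂ρ)
    (hM : M = ∫ p, m p ∂ρ) (hM' : M' = ∫ p, n p ∂ρ) :
    ∫ z, (f z.1 z.2 - m z.1 - m z.2 + M) * (g z.1 z.2 - n z.1 - n z.2 + M') ∂(ρ.prod ρ)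
      = (∫ z, f z.1 z.2 * g z.1 z.2 ∂(ρ.prod ρ)) - 2 * (∫ p, m p * n p ∂ρ) + M * M' := by
  have hprodS := dc_prodS hSm hS
  -- pointwise descriptions and measurability
  have hmp : ∀ p, m p = ∫ q, f p q ∂ρ := fun p => by rw [hm]
  have hnp : ∀ p, n p = ∫ q, g p q ∂ρ := fun p => by rw [hn]
  have mSM : StronglyMeasurable m := by rw [hm]; exact dc_m_meas hfm
  have nSM : StronglyMeasurable n := by rw [hn]; exact dc_m_meas hgm
  have hm0 : ∀ p, 0 ≤ m p := fun p => by rw [hmp]; exact integral_nonneg fun q => hf0 p q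
  have hn0 : ∀ p, 0 ≤ n p := fun p => by rw [hnp]; exact integral_nonneg fun q => hg0 p q
  have hmle : ∀ p ∈ S, m p ≤ D := fun p hp => by rw [hmp]; exact dc_m_le hfm hf0 hS hfb hp
  have hnle : ∀ p ∈ S, n p ≤ D := fun p hp => by rw [hnp]; exact dc_m_le hgm hg0 hS hgb hp
  have imI : Integrable m ρ := by rw [hm]; exact dc_m_int hfm hf0 hS hfb
  have inI : Integrable n ρ := by rw [hn]; exact dc_m_int hgm hg0 hS hgb
  have hD0 : 0 ≤ D := by
    by_contra hc
    push_neg at hc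
    have : ∀ᵐ p ∂ρ, False := hS.mono fun p hp => absurd (le_trans (hm0 p) (hmle p hp))
      (by push_neg; linarith)
    have h2 : (ρ Set.univ : ENNReal) = 0 := by
      simpa [ae_iff] using this
    simp [measure_univ] at h2
  have hM0 : 0 ≤ M := hM ▸ integral_nonneg fun p => hm0 p
  have hM'0 : 0 ≤ M' := hM' ▸ integral_nonneg fun p => hn0 p
  have hMle : M ≤ D := by
    rw [hM]
    calc ∫ p, m p ∂ρ ≤ ∫ _p, D ∂ρ :=
          integral_mono_ae imI (integrable_const D) (hS.mono fun p hp => hmle p hp)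
      _ = D := by simp [measure_univ]
  have hM'le : M' ≤ D := by
    rw [hM']
    calc ∫ p, n p ∂ρ ≤ ∫ _p, D ∂ρ :=
          integral_mono_ae inI (integrable_const D) (hS.mono fun p hp => hnle p hp)
      _ = D := by simp [measure_univ]
  have imnI : Integrable (fun p => m p * n p) ρ := by
    have hsm : AEStronglyMeasurable (fun p => m p * n p) ρ := (mSM.mul nSM).aestronglyMeasurable
    apply dc_int_of_bound hsm (C := D * D)
    filter_upwards [hS] with p hp
    rw [abs_of_nonneg (mul_nonneg (hm0 p) (hn0 p))]
    exact mul_le_mul (hmle p hp) (hnle p hp) (hn0 p) hD0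
  -- the integrands
  set U : W × W → ℝ := fun z => f z.1 z.2 - m z.1 - m z.2 + M with hU
  set V : W × W → ℝ := fun z => g z.1 z.2 - n z.1 - n z.2 + M' with hV
  set K : W × W → ℝ := fun z => (f z.1 z.2 - m z.2) * (g z.1 z.2 - n z.2) with hK
  set FG : W × W → ℝ := fun z => f z.1 z.2 * g z.1 z.2 with hFG
  have USM : StronglyMeasurable U :=
    ((hfm.sub (mSM.comp_measurable measurable_fst)).sub
      (mSM.comp_measurable measurable_snd)).add stronglyMeasurable_const
  have VSM : StronglyMeasurable V :=
    ((hgm.sub (nSM.comp_measurable measurable_fst)).sub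
      (nSM.comp_measurable measurable_snd)).add stronglyMeasurable_const
  have iUV : Integrable (fun z => U z * V z) (ρ.prod ρ) := by
    apply dc_int_of_bound (USM.mul VSM).aestronglyMeasurable (C := (2*D) * (2*D))
    filter_upwards [hprodS] with z hz
    have h1 := hfb _ hz.1 _ hz.2
    have h2 := hgb _ hz.1 _ hz.2
    have h3 := hf0 z.1 z.2
    have h4 := hg0 z.1 z.2
    have h5 := hmle _ hz.1; have h6 := hmle _ hz.2
    have h7 := hnle _ hz.1; have h8 := hnle _ hz.2
    have h9 := hm0 z.1; have h10 := hm0 z.2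
    have h11 := hn0 z.1; have h12 := hn0 z.2
    have hUb : |U z| ≤ 2*D := abs_le.2 ⟨by simp only [hU]; linarith, by simp only [hU]; linarith⟩
    have hVb : |V z| ≤ 2*D := abs_le.2 ⟨by simp only [hV]; linarith, by simp only [hV]; linarith⟩
    calc |U z * V z| = |U z| * |V z| := abs_mul _ _
      _ ≤ (2*D) * (2*D) := mul_le_mul hUb hVb (abs_nonneg _) (by linarith)
  have iK : Integrable K (ρ.prod ρ) := by
    apply dc_int_of_bound
      ((hfm.sub (mSM.comp_measurable measurable_snd)).mul
        (hgm.sub (nSM.comp_measurable measurable_snd))).aestronglyMeasurable (C := D * D)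
    filter_upwards [hprodS] with z hz
    have h1 := hfb _ hz.1 _ hz.2
    have h2 := hgb _ hz.1 _ hz.2
    have h3 := hf0 z.1 z.2
    have h4 := hg0 z.1 z.2
    have h6 := hmle _ hz.2; have h8 := hnle _ hz.2
    have h10 := hm0 z.2; have h12 := hn0 z.2
    have hUb : |f z.1 z.2 - m z.2| ≤ D := abs_le.2 ⟨by linarith, by linarith⟩
    have hVb : |g z.1 z.2 - n z.2| ≤ D := abs_le.2 ⟨by linarith, by linarith⟩
    calc |K z| = |f z.1 z.2 - m z.2| * |g z.1 z.2 - n z.2| := abs_mul _ _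
      _ ≤ D * D := mul_le_mul hUb hVb (abs_nonneg _) hD0
  have iFG : Integrable FG (ρ.prod ρ) := by
    have hsm : AEStronglyMeasurable FG (ρ.prod ρ) := (hfm.mul hgm).aestronglyMeasurable
    apply dc_int_of_bound hsm (C := D * D)
    filter_upwards [hprodS] with z hz
    rw [abs_of_nonneg (mul_nonneg (hf0 _ _) (hg0 _ _))]
    exact mul_le_mul (hfb _ hz.1 _ hz.2) (hgb _ hz.1 _ hz.2) (hg0 _ _) hD0
  -- Step 2: inner integral over q, for p ∈ S
  have step2 : ∀ᵐ p ∂ρ, (∫ q, U (p, q) * V (p, q) ∂ρ)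
      = (∫ q, K (p, q) ∂ρ) - (M - m p) * (M' - n p) := by
    filter_upwards [hS] with p hp
    have iφ : Integrable (fun q => f p q - m q) ρ := (dc_sliceInt hfm hf0 hS hfb hp).sub imI
    have iψ : Integrable (fun q => g p q - n q) ρ := (dc_sliceInt hgm hg0 hS hgb hp).sub inI
    have iφψ : Integrable (fun q => (f p q - m q) * (g p q - n q)) ρ := by
      have hsm : AEStronglyMeasurable (fun q => (f p q - m q) * (g p q - n q)) ρ :=
        ((((hfm.comp_measurable (measurable_prodMk_left (x := p))).sub mSM)).mul
          ((hgm.comp_measurable (measurable_prodMk_left (x := p))).sub nSM)).aestronglyMeasurable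
      apply dc_int_of_bound hsm (C := D * D)
      filter_upwards [hS] with q hq
      have h1 := hfb p hp q hq
      have h2 := hgb p hp q hq
      have h3 := hf0 p q; have h4 := hg0 p q
      have h6 := hmle q hq; have h8 := hnle q hq
      have h10 := hm0 q; have h12 := hn0 q
      rw [abs_mul]
      exact mul_le_mul (abs_le.2 ⟨by linarith, by linarith⟩)
        (abs_le.2 ⟨by linarith, by linarith⟩) (abs_nonneg _) hD0
    have hUe : (fun q => U (p, q) * V (p, q))
        = fun q => ((f p q - m q) + (M - m p)) * ((g p q - n q) + (M' - n p)) := by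
      funext q; simp only [hU, hV]; ring
    have hiφ : ∫ q, (f p q - m q) ∂ρ = m p - M := by
      rw [integral_sub (dc_sliceInt hfm hf0 hS hfb hp) imI, ← hmp p, ← hM]
    have hiψ : ∫ q, (g p q - n q) ∂ρ = n p - M' := by
      rw [integral_sub (dc_sliceInt hgm hg0 hS hgb hp) inI, ← hnp p, ← hM']
    rw [hUe, dc_expand _ _ _ _ iφ iψ iφψ, hiφ, hiψ]
    have : ∫ q, K (p, q) ∂ρ = ∫ q, (f p q - m q) * (g p q - n q) ∂ρ := rfl
    rw [this]; ring
  -- Step 6: inner integral over p, for q ∈ S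
  have step6 : ∀ᵐ q ∂ρ, (∫ p, K (p, q) ∂ρ)
      = (∫ p, f p q * g p q ∂ρ) - m q * n q := by
    filter_upwards [hS] with q hq
    have hfsl : (fun p => f p q) = fun p => f q p := funext fun p => hfs p q
    have hgsl : (fun p => g p q) = fun p => g q p := funext fun p => hgs p q
    have iφ : Integrable (fun p => f p q) ρ := by
      rw [hfsl]; exact dc_sliceInt hfm hf0 hS hfb hq
    have iψ : Integrable (fun p => g p q) ρ := by
      rw [hgsl]; exact dc_sliceInt hgm hg0 hS hgb hq
    have hiφ : ∫ p, f p q ∂ρ = m q := by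
      rw [hfsl, ← hmp q]
    have hiψ : ∫ p, g p q ∂ρ = n q := by
      rw [hgsl, ← hnp q]
    have iφψ : Integrable (fun p => f p q * g p q) ρ := by
      have hsm : AEStronglyMeasurable (fun p => f p q * g p q) ρ :=
        ((hfm.comp_measurable (measurable_prodMk_right (y := q))).mul
          (hgm.comp_measurable (measurable_prodMk_right (y := q)))).aestronglyMeasurable
      apply dc_int_of_bound hsm (C := D * D)
      filter_upwards [hS] with p hp
      rw [abs_of_nonneg (mul_nonneg (hf0 _ _) (hg0 _ _))]
      exact mul_le_mul (hfb p hp q hq) (hgb p hp q hq) (hg0 _ _) hD0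
    have hKe : (fun p => K (p, q)) = fun p => ((f p q) + (-(m q))) * ((g p q) + (-(n q))) := by
      funext p; simp only [hK]; ring
    rw [hKe, dc_expand _ _ _ _ iφ iψ iφψ, hiφ, hiψ]
    ring
  -- assemble
  have e1 : ∫ z, U z * V z ∂ρ.prod ρ = ∫ p, ∫ q, U (p, q) * V (p, q) ∂ρ ∂ρ :=
    integral_prod _ iUV
  have iMm : Integrable (fun p => (M - m p) * (M' - n p)) ρ := by
    have hsm : AEStronglyMeasurable (fun p => (M - m p) * (M' - n p)) ρ :=
      (((stronglyMeasurable_const.sub mSM)).mul (stronglyMeasurable_const.sub nSM)).aestronglyMeasurable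
    apply dc_int_of_bound hsm (C := D * D)
    filter_upwards [hS] with p hp
    rw [abs_mul]
    exact mul_le_mul (abs_le.2 ⟨by have := hmle p hp; have := hm0 p; linarith,
        by have := hmle p hp; have := hm0 p; linarith⟩)
      (abs_le.2 ⟨by have := hnle p hp; have := hn0 p; linarith,
        by have := hnle p hp; have := hn0 p; linarith⟩) (abs_nonneg _) hD0
  have e2 : ∫ p, ∫ q, U (p, q) * V (p, q) ∂ρ ∂ρ
      = (∫ p, ∫ q, K (p, q) ∂ρ ∂ρ) - ∫ p, (M - m p) * (M' - n p) ∂ρ := by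
    rw [integral_congr_ae step2]
    exact integral_sub (iK.integral_prod_left) iMm
  have e3 : ∫ p, ∫ q, K (p, q) ∂ρ ∂ρ = ∫ z, K z ∂ρ.prod ρ := (integral_prod _ iK).symm
  have e4 : ∫ z, K z ∂ρ.prod ρ = ∫ q, ∫ p, K (p, q) ∂ρ ∂ρ := integral_prod_symm _ iK
  have e5 : ∫ q, ∫ p, K (p, q) ∂ρ ∂ρ
      = (∫ q, ∫ p, FG (p, q) ∂ρ ∂ρ) - ∫ q, m q * n q ∂ρ := by
    rw [integral_congr_ae step6]
    exact integral_sub (iFG.integral_prod_right) imnI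
  have e6 : ∫ q, ∫ p, FG (p, q) ∂ρ ∂ρ = ∫ z, FG z ∂ρ.prod ρ := (integral_prod_symm _ iFG).symm
  have e7 : ∫ p, (M - m p) * (M' - n p) ∂ρ = (∫ p, m p * n p ∂ρ) - M * M' := by
    have hKe : (fun p => (M - m p) * (M' - n p))
        = fun p => ((-(m p)) + M) * ((-(n p)) + M') := by funext p; ring
    have hφψ : Integrable (fun p => (-(m p)) * (-(n p))) ρ := by
      have : (fun p => (-(m p)) * (-(n p))) = fun p => m p * n p := by funext p; ring
      rw [this]; exact imnI
    rw [hKe, dc_expand (fun p => -(m p)) (fun p => -(n p)) M M' imI.neg inI.neg hφψ]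
    have h1 : ∫ p, (-(m p)) * (-(n p)) ∂ρ = ∫ p, m p * n p ∂ρ := by
      congr 1; funext p; ring
    rw [h1, integral_neg, integral_neg, ← hM, ← hM']
    ring
  calc ∫ z, U z * V z ∂ρ.prod ρ
      = (∫ z, FG z ∂ρ.prod ρ) - (∫ q, m q * n q ∂ρ)
        - ((∫ p, m p * n p ∂ρ) - M * M') := by
        rw [e1, e2, e3, e4, e5, e6, e7]
    _ = (∫ z, FG z ∂ρ.prod ρ) - 2 * (∫ p, m p * n p ∂ρ) + M * M' := by ring

lemma dc_amgm (u v : ℝ) : u * v ≤ (u * u + v * v) / 2 := by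
  nlinarith [mul_self_nonneg (u - v)]

set_option maxHeartbeats 1000000 in
/-- Core bound: for symmetric nonneg kernels bounded by `D` on a full-measure set,
the distance-covariance combination is at most `D²/4`. -/
lemma dc_core {W : Type*} [MeasurableSpace W] {ρ : Measure W} [IsProbabilityMeasure ρ]
    (f g : W → W → ℝ) (S : Set W) (D : ℝ)
    (hfm : StronglyMeasurable fun z : W × W => f z.1 z.2)
    (hgm : StronglyMeasurable fun z : W × W => g z.1 z.2)
    (hfs : ∀ p q, f p q = f q p) (hgs : ∀ p q, g p q = g q p)
    (hf0 : ∀ p q, 0 ≤ f p q) (hg0 : ∀ p q, 0 ≤ g p q)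
    (hSm : MeasurableSet S) (hS : ∀ᵐ p ∂ρ, p ∈ S)
    (hfb : ∀ p ∈ S, ∀ q ∈ S, f p q ≤ D) (hgb : ∀ p ∈ S, ∀ q ∈ S, g p q ≤ D) :
    (∫ z, f z.1 z.2 * g z.1 z.2 ∂(ρ.prod ρ))
      + (∫ z, f z.1 z.2 ∂(ρ.prod ρ)) * (∫ z, g z.1 z.2 ∂(ρ.prod ρ))
      - 2 * (∫ p, (∫ q, f p q ∂ρ) * (∫ q, g p q ∂ρ) ∂ρ) ≤ D ^ 2 / 4 := by
  have hprodS := dc_prodS hSm hS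
  set m : W → ℝ := fun p => ∫ q, f p q ∂ρ with hm
  set n : W → ℝ := fun p => ∫ q, g p q ∂ρ with hn
  set M : ℝ := ∫ p, m p ∂ρ with hM
  set M' : ℝ := ∫ p, n p ∂ρ with hM'
  have mSM : StronglyMeasurable m := dc_m_meas hfm
  have nSM : StronglyMeasurable n := dc_m_meas hgm
  have hm0 : ∀ p, 0 ≤ m p := fun p => integral_nonneg fun q => hf0 p q
  have hn0 : ∀ p, 0 ≤ n p := fun p => integral_nonneg fun q => hg0 p q
  have hmle : ∀ p ∈ S, m p ≤ D := fun p hp => dc_m_le hfm hf0 hS hfb hp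
  have hnle : ∀ p ∈ S, n p ≤ D := fun p hp => dc_m_le hgm hg0 hS hgb hp
  have imI : Integrable m ρ := dc_m_int hfm hf0 hS hfb
  have inI : Integrable n ρ := dc_m_int hgm hg0 hS hgb
  have hD0 : 0 ≤ D := by
    by_contra hc
    push_neg at hc
    have : ∀ᵐ p ∂ρ, False := hS.mono fun p hp => absurd (le_trans (hm0 p) (hmle p hp))
      (by push_neg; linarith)
    have h2 : (ρ Set.univ : ENNReal) = 0 := by simpa [ae_iff] using this
    simp [measure_univ] at h2
  have hM0 : 0 ≤ M := integral_nonneg fun p => hm0 p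
  have hM'0 : 0 ≤ M' := integral_nonneg fun p => hn0 p
  have hMle : M ≤ D := by
    rw [hM]
    calc ∫ p, m p ∂ρ ≤ ∫ _p, D ∂ρ :=
          integral_mono_ae imI (integrable_const D) (hS.mono fun p hp => hmle p hp)
      _ = D := by simp [measure_univ]
  have hM'le : M' ≤ D := by
    rw [hM']
    calc ∫ p, n p ∂ρ ≤ ∫ _p, D ∂ρ :=
          integral_mono_ae inI (integrable_const D) (hS.mono fun p hp => hnle p hp)
      _ = D := by simp [measure_univ]
  -- reduce the marginal integrals
  have iF : Integrable (fun z : W × W => f z.1 z.2) (ρ.prod ρ) := dc_intF hfm hf0 hSm hS hfb hprodS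
  have iG : Integrable (fun z : W × W => g z.1 z.2) (ρ.prod ρ) := dc_intF hgm hg0 hSm hS hgb hprodS
  have hMeq : ∫ z, f z.1 z.2 ∂(ρ.prod ρ) = M := by
    have h1 : ∫ z : W × W, f z.1 z.2 ∂(ρ.prod ρ) = ∫ p, ∫ q, f p q ∂ρ ∂ρ := integral_prod _ iF
    rw [h1, hM]
  have hM'eq : ∫ z, g z.1 z.2 ∂(ρ.prod ρ) = M' := by
    have h1 : ∫ z : W × W, g z.1 z.2 ∂(ρ.prod ρ) = ∫ p, ∫ q, g p q ∂ρ ∂ρ := integral_prod _ iG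
    rw [h1, hM']
  -- U and V
  set U : W × W → ℝ := fun z => f z.1 z.2 - m z.1 - m z.2 + M with hU
  set V : W × W → ℝ := fun z => g z.1 z.2 - n z.1 - n z.2 + M' with hV
  have USM : StronglyMeasurable U :=
    ((hfm.sub (mSM.comp_measurable measurable_fst)).sub
      (mSM.comp_measurable measurable_snd)).add stronglyMeasurable_const
  have VSM : StronglyMeasurable V :=
    ((hgm.sub (nSM.comp_measurable measurable_fst)).sub
      (nSM.comp_measurable measurable_snd)).add stronglyMeasurable_const
  have hUb : ∀ᵐ z ∂ρ.prod ρ, |U z| ≤ 2 * D := by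
    filter_upwards [hprodS] with z hz
    have h1 := hfb _ hz.1 _ hz.2
    have h3 := hf0 z.1 z.2
    have h5 := hmle _ hz.1; have h6 := hmle _ hz.2
    have h9 := hm0 z.1; have h10 := hm0 z.2
    exact abs_le.2 ⟨by simp only [hU]; linarith, by simp only [hU]; linarith⟩
  have hVb : ∀ᵐ z ∂ρ.prod ρ, |V z| ≤ 2 * D := by
    filter_upwards [hprodS] with z hz
    have h1 := hgb _ hz.1 _ hz.2
    have h3 := hg0 z.1 z.2
    have h5 := hnle _ hz.1; have h6 := hnle _ hz.2
    have h9 := hn0 z.1; have h10 := hn0 z.2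
    exact abs_le.2 ⟨by simp only [hV]; linarith, by simp only [hV]; linarith⟩
  have iUU : Integrable (fun z => U z * U z) (ρ.prod ρ) := by
    have hsm : AEStronglyMeasurable (fun z => U z * U z) (ρ.prod ρ) :=
      (USM.mul USM).aestronglyMeasurable
    apply dc_int_of_bound hsm (C := (2*D) * (2*D))
    filter_upwards [hUb] with z h
    rw [abs_mul]
    exact mul_le_mul h h (abs_nonneg _) (by linarith)
  have iVV : Integrable (fun z => V z * V z) (ρ.prod ρ) := by
    have hsm : AEStronglyMeasurable (fun z => V z * V z) (ρ.prod ρ) :=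
      (VSM.mul VSM).aestronglyMeasurable
    apply dc_int_of_bound hsm (C := (2*D) * (2*D))
    filter_upwards [hVb] with z h
    rw [abs_mul]
    exact mul_le_mul h h (abs_nonneg _) (by linarith)
  have iUV : Integrable (fun z => U z * V z) (ρ.prod ρ) := by
    have hsm : AEStronglyMeasurable (fun z => U z * V z) (ρ.prod ρ) :=
      (USM.mul VSM).aestronglyMeasurable
    apply dc_int_of_bound hsm (C := (2*D) * (2*D))
    filter_upwards [hUb, hVb] with z h h'
    rw [abs_mul]
    exact mul_le_mul h h' (abs_nonneg _) (by linarith)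
  -- identities from dc_aux
  have auxfg := dc_aux f g S D hfm hgm hfs hgs hf0 hg0 hSm hS hfb hgb m n M M' hm hn hM hM'
  have auxff := dc_aux f f S D hfm hfm hfs hfs hf0 hf0 hSm hS hfb hfb m m M M hm hm hM hM
  have auxgg := dc_aux g g S D hgm hgm hgs hgs hg0 hg0 hSm hS hgb hgb n n M' M' hn hn hM' hM'
  -- bound ∫ f² by D * M
  have iFF : Integrable (fun z : W × W => f z.1 z.2 * f z.1 z.2) (ρ.prod ρ) := by
    have hsm : AEStronglyMeasurable (fun z : W × W => f z.1 z.2 * f z.1 z.2) (ρ.prod ρ) :=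
      (hfm.mul hfm).aestronglyMeasurable
    apply dc_int_of_bound hsm (C := D * D)
    filter_upwards [hprodS] with z hz
    rw [abs_of_nonneg (mul_nonneg (hf0 _ _) (hf0 _ _))]
    exact mul_le_mul (hfb _ hz.1 _ hz.2) (hfb _ hz.1 _ hz.2) (hf0 _ _) hD0
  have iGG : Integrable (fun z : W × W => g z.1 z.2 * g z.1 z.2) (ρ.prod ρ) := by
    have hsm : AEStronglyMeasurable (fun z : W × W => g z.1 z.2 * g z.1 z.2) (ρ.prod ρ) :=
      (hgm.mul hgm).aestronglyMeasurable
    apply dc_int_of_bound hsm (C := D * D)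
    filter_upwards [hprodS] with z hz
    rw [abs_of_nonneg (mul_nonneg (hg0 _ _) (hg0 _ _))]
    exact mul_le_mul (hgb _ hz.1 _ hz.2) (hgb _ hz.1 _ hz.2) (hg0 _ _) hD0
  have hF2le : ∫ z, f z.1 z.2 * f z.1 z.2 ∂(ρ.prod ρ) ≤ D * M := by
    have h1 : ∫ z, f z.1 z.2 * f z.1 z.2 ∂(ρ.prod ρ) ≤ ∫ z : W × W, D * f z.1 z.2 ∂(ρ.prod ρ) := by
      apply integral_mono_ae iFF (iF.const_mul D)
      filter_upwards [hprodS] with z hz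
      exact mul_le_mul_of_nonneg_right (hfb _ hz.1 _ hz.2) (hf0 _ _)
    rw [integral_const_mul, hMeq] at h1
    exact h1
  have hG2le : ∫ z, g z.1 z.2 * g z.1 z.2 ∂(ρ.prod ρ) ≤ D * M' := by
    have h1 : ∫ z, g z.1 z.2 * g z.1 z.2 ∂(ρ.prod ρ) ≤ ∫ z : W × W, D * g z.1 z.2 ∂(ρ.prod ρ) := by
      apply integral_mono_ae iGG (iG.const_mul D)
      filter_upwards [hprodS] with z hz
      exact mul_le_mul_of_nonneg_right (hgb _ hz.1 _ hz.2) (hg0 _ _)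
    rw [integral_const_mul, hM'eq] at h1
    exact h1
  -- Jensen-type: M² ≤ ∫ m² and M'² ≤ ∫ n²
  have imm : Integrable (fun p => m p * m p) ρ := by
    have hsm : AEStronglyMeasurable (fun p => m p * m p) ρ := (mSM.mul mSM).aestronglyMeasurable
    apply dc_int_of_bound hsm (C := D * D)
    filter_upwards [hS] with p hp
    rw [abs_of_nonneg (mul_nonneg (hm0 p) (hm0 p))]
    exact mul_le_mul (hmle p hp) (hmle p hp) (hm0 p) hD0
  have inn : Integrable (fun p => n p * n p) ρ := by
    have hsm : AEStronglyMeasurable (fun p => n p * n p) ρ := (nSM.mul nSM).aestronglyMeasurable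
    apply dc_int_of_bound hsm (C := D * D)
    filter_upwards [hS] with p hp
    rw [abs_of_nonneg (mul_nonneg (hn0 p) (hn0 p))]
    exact mul_le_mul (hnle p hp) (hnle p hp) (hn0 p) hD0
  have hm2ge : M * M ≤ ∫ p, m p * m p ∂ρ := by
    have h0 : (0:ℝ) ≤ ∫ p, (m p + (-M)) * (m p + (-M)) ∂ρ :=
      integral_nonneg fun p => mul_self_nonneg _
    rw [dc_expand (fun p => m p) (fun p => m p) (-M) (-M) imI imI imm, ← hM] at h0
    linarith
  have hn2ge : M' * M' ≤ ∫ p, n p * n p ∂ρ := by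
    have h0 : (0:ℝ) ≤ ∫ p, (n p + (-M')) * (n p + (-M')) ∂ρ :=
      integral_nonneg fun p => mul_self_nonneg _
    rw [dc_expand (fun p => n p) (fun p => n p) (-M') (-M') inI inI inn, ← hM'] at h0
    linarith
  -- variance bounds
  have varf : ∫ z, U z * U z ∂(ρ.prod ρ) ≤ D ^ 2 / 4 := by
    calc ∫ z, U z * U z ∂(ρ.prod ρ)
        = (∫ z, f z.1 z.2 * f z.1 z.2 ∂(ρ.prod ρ)) - 2 * (∫ p, m p * m p ∂ρ) + M * M := auxff
      _ ≤ D ^ 2 / 4 := by nlinarith [sq_nonneg (D - 2 * M)]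
  have varg : ∫ z, V z * V z ∂(ρ.prod ρ) ≤ D ^ 2 / 4 := by
    calc ∫ z, V z * V z ∂(ρ.prod ρ)
        = (∫ z, g z.1 z.2 * g z.1 z.2 ∂(ρ.prod ρ)) - 2 * (∫ p, n p * n p ∂ρ) + M' * M' := auxgg
      _ ≤ D ^ 2 / 4 := by nlinarith [sq_nonneg (D - 2 * M')]
  -- final AM–GM step
  have hUVle : ∫ z, U z * V z ∂(ρ.prod ρ)
      ≤ ((∫ z, U z * U z ∂(ρ.prod ρ)) + (∫ z, V z * V z ∂(ρ.prod ρ))) / 2 := by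
    have h1 : ∫ z, U z * V z ∂(ρ.prod ρ)
        ≤ ∫ z, (U z * U z + V z * V z) / 2 ∂(ρ.prod ρ) := by
      apply integral_mono iUV ((iUU.add iVV).div_const 2)
      intro z
      exact dc_amgm (U z) (V z)
    rwa [integral_div, integral_add iUU iVV] at h1
  have hfinal : ∫ z, U z * V z ∂(ρ.prod ρ) ≤ D ^ 2 / 4 := by
    calc ∫ z, U z * V z ∂(ρ.prod ρ) ≤ _ := hUVle
      _ ≤ D ^ 2 / 4 := by linarith
  have auxfg' : ∫ z, U z * V z ∂(ρ.prod ρ)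
      = (∫ z, f z.1 z.2 * g z.1 z.2 ∂(ρ.prod ρ)) - 2 * (∫ p, m p * n p ∂ρ) + M * M' := auxfg
  have hgoal_eq : ∫ p, (∫ q, f p q ∂ρ) * (∫ q, g p q ∂ρ) ∂ρ = ∫ p, m p * n p ∂ρ := rfl
  rw [hMeq, hM'eq, hgoal_eq]
  linarith [hfinal, auxfg']

lemma dc_norm_le {N : ℕ} {a : ℝ} (x y : EuclideanSpace ℝ (Fin N))
    (hx : ∀ i, x i ∈ Set.Icc a (a + 1)) (hy : ∀ i, y i ∈ Set.Icc a (a + 1)) :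
    ‖x - y‖ ≤ Real.sqrt N := by
  rw [EuclideanSpace.norm_eq]
  apply Real.sqrt_le_sqrt
  calc ∑ i, ‖(x - y) i‖ ^ 2 ≤ ∑ _i : Fin N, 1 := by
        apply Finset.sum_le_sum
        intro i _
        have h1 := hx i; have h2 := hy i
        simp only [Set.mem_Icc] at h1 h2
        have habs : |x i - y i| ≤ 1 := abs_sub_le_iff.2 ⟨by linarith, by linarith⟩
        calc ‖(x - y) i‖ ^ 2 = |x i - y i| ^ 2 := by simp [Real.norm_eq_abs]
          _ ≤ 1 ^ 2 := pow_le_pow_left₀ (abs_nonneg _) habs 2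
          _ = 1 := one_pow 2
    _ = N := by simp

/-- Corollary: for iid pairs `(X,Y)`, `(X',Y')`, `(X'',Y'')` with `X` taking values in
`[a,a+1]^N` and `Y` in `[c,c+1]^N`, the distance covariance satisfies
`dCov(X,Y) ≤ √N / 2`; equivalently `dCov²(X,Y) ≤ N/4`, where
`dCov²(X,Y) = E[‖X−X'‖‖Y−Y'‖] + E[‖X−X'‖]E[‖Y−Y'‖] − E[‖X−X'‖‖Y−Y''‖] − E[‖X−X''‖‖Y−Y'‖]`
and `dCov(X,Y)` is its nonnegative square root. -/
theorem dCov_le_of_unit_intervals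
    {Ω : Type*} [MeasurableSpace Ω] (μ : Measure Ω) [IsProbabilityMeasure μ]
    (a c : ℝ) (N : ℕ) (hN : 1 ≤ N)
    (X X' X'' : Ω → EuclideanSpace ℝ (Fin N))
    (Y Y' Y'' : Ω → EuclideanSpace ℝ (Fin N))
    (hXm : Measurable X) (hX'm : Measurable X') (hX''m : Measurable X'')
    (hYm : Measurable Y) (hY'm : Measurable Y') (hY''m : Measurable Y'')
    (hindep : iIndepFun
      ![fun ω => (X ω, Y ω), fun ω => (X' ω, Y' ω), fun ω => (X'' ω, Y'' ω)] μ)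
    (hid1 : IdentDistrib (fun ω => (X ω, Y ω)) (fun ω => (X' ω, Y' ω)) μ μ)
    (hid2 : IdentDistrib (fun ω => (X ω, Y ω)) (fun ω => (X'' ω, Y'' ω)) μ μ)
    (hXab : ∀ᵐ ω ∂μ, ∀ i, X ω i ∈ Set.Icc a (a + 1))
    (hX'ab : ∀ᵐ ω ∂μ, ∀ i, X' ω i ∈ Set.Icc a (a + 1))
    (hX''ab : ∀ᵐ ω ∂μ, ∀ i, X'' ω i ∈ Set.Icc a (a + 1))
    (hYcd : ∀ᵐ ω ∂μ, ∀ i, Y ω i ∈ Set.Icc c (c + 1))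
    (hY'cd : ∀ᵐ ω ∂μ, ∀ i, Y' ω i ∈ Set.Icc c (c + 1))
    (hY''cd : ∀ᵐ ω ∂μ, ∀ i, Y'' ω i ∈ Set.Icc c (c + 1)) :
    Real.sqrt ((∫ ω, ‖X ω - X' ω‖ * ‖Y ω - Y' ω‖ ∂μ)
          + (∫ ω, ‖X ω - X' ω‖ ∂μ) * (∫ ω, ‖Y ω - Y' ω‖ ∂μ)
          - (∫ ω, ‖X ω - X' ω‖ * ‖Y ω - Y'' ω‖ ∂μ)
          - (∫ ω, ‖X ω - X'' ω‖ * ‖Y ω - Y' ω‖ ∂μ))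
        ≤ Real.sqrt N / 2
      ∧ (∫ ω, ‖X ω - X' ω‖ * ‖Y ω - Y' ω‖ ∂μ)
          + (∫ ω, ‖X ω - X' ω‖ ∂μ) * (∫ ω, ‖Y ω - Y' ω‖ ∂μ)
          - (∫ ω, ‖X ω - X' ω‖ * ‖Y ω - Y'' ω‖ ∂μ)
          - (∫ ω, ‖X ω - X'' ω‖ * ‖Y ω - Y' ω‖ ∂μ)
        ≤ (N : ℝ) / 4 := by
  set p0 : Ω → EuclideanSpace ℝ (Fin N) × EuclideanSpace ℝ (Fin N) := fun ω => (X ω, Y ω) with hp0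
  set p1 : Ω → EuclideanSpace ℝ (Fin N) × EuclideanSpace ℝ (Fin N) := fun ω => (X' ω, Y' ω) with hp1
  set p2 : Ω → EuclideanSpace ℝ (Fin N) × EuclideanSpace ℝ (Fin N) := fun ω => (X'' ω, Y'' ω) with hp2
  have hm0 : Measurable p0 := hXm.prodMk hYm
  have hm1 : Measurable p1 := hX'm.prodMk hY'm
  have hm2 : Measurable p2 := hX''m.prodMk hY''m
  set ρ : Measure (EuclideanSpace ℝ (Fin N) × EuclideanSpace ℝ (Fin N)) := Measure.map p0 μ with hρ
  haveI : IsProbabilityMeasure ρ := Measure.isProbabilityMeasure_map hm0.aemeasurable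
  have hmap1 : Measure.map p1 μ = ρ := hid1.map_eq.symm
  have hmap2 : Measure.map p2 μ = ρ := hid2.map_eq.symm
  -- the kernels
  set f : (EuclideanSpace ℝ (Fin N) × EuclideanSpace ℝ (Fin N)) → (EuclideanSpace ℝ (Fin N) × EuclideanSpace ℝ (Fin N)) → ℝ := fun p q => ‖p.1 - q.1‖ with hf
  set g : (EuclideanSpace ℝ (Fin N) × EuclideanSpace ℝ (Fin N)) → (EuclideanSpace ℝ (Fin N) × EuclideanSpace ℝ (Fin N)) → ℝ := fun p q => ‖p.2 - q.2‖ with hg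
  set S : Set (EuclideanSpace ℝ (Fin N) × EuclideanSpace ℝ (Fin N)) := {p | (∀ i, p.1 i ∈ Set.Icc a (a + 1)) ∧ ∀ i, p.2 i ∈ Set.Icc c (c + 1)} with hSdef
  have hSm : MeasurableSet S := by
    rw [hSdef, Set.setOf_and]
    apply MeasurableSet.inter
    · rw [Set.setOf_forall]
      exact MeasurableSet.iInter fun i =>
        ((measurable_pi_apply i).comp (Measurable.comp (WithLp.measurable_ofLp 2 _) measurable_fst)) measurableSet_Icc
    · rw [Set.setOf_forall]
      exact MeasurableSet.iInter fun i =>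
        ((measurable_pi_apply i).comp (Measurable.comp (WithLp.measurable_ofLp 2 _) measurable_snd)) measurableSet_Icc
  have hS : ∀ᵐ p ∂ρ, p ∈ S := by
    rw [hρ]
    refine (ae_map_iff hm0.aemeasurable (p := fun p => p ∈ S) hSm).2 ?_
    filter_upwards [hXab, hYcd] with ω h1 h2
    exact ⟨h1, h2⟩
  have mf : Measurable fun z : (EuclideanSpace ℝ (Fin N) × EuclideanSpace ℝ (Fin N)) × (EuclideanSpace ℝ (Fin N) × EuclideanSpace ℝ (Fin N)) => f z.1 z.2 :=
    (measurable_fst.fst.sub measurable_snd.fst).norm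
  have mg : Measurable fun z : (EuclideanSpace ℝ (Fin N) × EuclideanSpace ℝ (Fin N)) × (EuclideanSpace ℝ (Fin N) × EuclideanSpace ℝ (Fin N)) => g z.1 z.2 :=
    (measurable_fst.snd.sub measurable_snd.snd).norm
  have m3 : Measurable fun w : (EuclideanSpace ℝ (Fin N) × EuclideanSpace ℝ (Fin N)) × ((EuclideanSpace ℝ (Fin N) × EuclideanSpace ℝ (Fin N)) × (EuclideanSpace ℝ (Fin N) × EuclideanSpace ℝ (Fin N))) => f w.1 w.2.1 * g w.1 w.2.2 :=
    ((measurable_fst.fst.sub measurable_snd.fst.fst).norm.mul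
      ((measurable_fst.snd.sub measurable_snd.snd.snd).norm))
  have m4 : Measurable fun w : (EuclideanSpace ℝ (Fin N) × EuclideanSpace ℝ (Fin N)) × ((EuclideanSpace ℝ (Fin N) × EuclideanSpace ℝ (Fin N)) × (EuclideanSpace ℝ (Fin N) × EuclideanSpace ℝ (Fin N))) => f w.1 w.2.2 * g w.1 w.2.1 :=
    ((measurable_fst.fst.sub measurable_snd.snd.fst).norm.mul
      ((measurable_fst.snd.sub measurable_snd.fst.snd).norm))
  have hfm : StronglyMeasurable fun z : (EuclideanSpace ℝ (Fin N) × EuclideanSpace ℝ (Fin N)) × (EuclideanSpace ℝ (Fin N) × EuclideanSpace ℝ (Fin N)) => f z.1 z.2 := mf.stronglyMeasurable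
  have hgm : StronglyMeasurable fun z : (EuclideanSpace ℝ (Fin N) × EuclideanSpace ℝ (Fin N)) × (EuclideanSpace ℝ (Fin N) × EuclideanSpace ℝ (Fin N)) => g z.1 z.2 := mg.stronglyMeasurable
  have hfs : ∀ p q, f p q = f q p := fun p q => norm_sub_rev _ _
  have hgs : ∀ p q, g p q = g q p := fun p q => norm_sub_rev _ _
  have hf0 : ∀ p q, 0 ≤ f p q := fun p q => norm_nonneg _
  have hg0 : ∀ p q, 0 ≤ g p q := fun p q => norm_nonneg _
  have hfb : ∀ p ∈ S, ∀ q ∈ S, f p q ≤ Real.sqrt N := fun p hp q hq =>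
    dc_norm_le p.1 q.1 hp.1 hq.1
  have hgb : ∀ p ∈ S, ∀ q ∈ S, g p q ≤ Real.sqrt N := fun p hp q hq =>
    dc_norm_le p.2 q.2 hp.2 hq.2
  -- independence and joint laws
  have ind01 : IndepFun p0 p1 μ := by
    have h := hindep.indepFun (show (0 : Fin 3) ≠ 1 by decide)
    simpa using h
  have ind12 : IndepFun p1 p2 μ := by
    have h := hindep.indepFun (show (1 : Fin 3) ≠ 2 by decide)
    simpa using h
  have hMeasAll : ∀ i, Measurable (![p0, p1, p2] i) := by
    intro i
    fin_cases i
    · exact hm0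
    · exact hm1
    · exact hm2
  have ind0_12 : IndepFun p0 (fun ω => (p1 ω, p2 ω)) μ := by
    have h := hindep.indepFun_prodMk hMeasAll 1 2 0 (by decide) (by decide)
    have h2 : IndepFun (fun ω => (p1 ω, p2 ω)) p0 μ := by simpa using h
    exact h2.symm
  have L2 : Measure.map (fun ω => (p0 ω, p1 ω)) μ = ρ.prod ρ := by
    rw [(indepFun_iff_map_prod_eq_prod_map_map hm0.aemeasurable hm1.aemeasurable).mp ind01,
      hmap1, hρ]
  have L23 : Measure.map (fun ω => (p1 ω, p2 ω)) μ = ρ.prod ρ := by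
    rw [(indepFun_iff_map_prod_eq_prod_map_map hm1.aemeasurable hm2.aemeasurable).mp ind12,
      hmap1, hmap2]
  have L3 : Measure.map (fun ω => (p0 ω, (p1 ω, p2 ω))) μ = ρ.prod (ρ.prod ρ) := by
    rw [(indepFun_iff_map_prod_eq_prod_map_map hm0.aemeasurable
      (hm1.prodMk hm2).aemeasurable).mp ind0_12, L23, hρ]
  -- rewrite the four expectations
  have e1 : ∫ z : (EuclideanSpace ℝ (Fin N) × EuclideanSpace ℝ (Fin N)) × (EuclideanSpace ℝ (Fin N) × EuclideanSpace ℝ (Fin N)), f z.1 z.2 * g z.1 z.2 ∂(ρ.prod ρ)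
      = ∫ ω, ‖X ω - X' ω‖ * ‖Y ω - Y' ω‖ ∂μ := by
    rw [← L2]
    exact integral_map (hm0.prodMk hm1).aemeasurable
      ((mf.mul mg).aestronglyMeasurable)
  have e2a : ∫ z : (EuclideanSpace ℝ (Fin N) × EuclideanSpace ℝ (Fin N)) × (EuclideanSpace ℝ (Fin N) × EuclideanSpace ℝ (Fin N)), f z.1 z.2 ∂(ρ.prod ρ) = ∫ ω, ‖X ω - X' ω‖ ∂μ := by
    rw [← L2]
    exact integral_map (hm0.prodMk hm1).aemeasurable
      (mf.aestronglyMeasurable)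
  have e2b : ∫ z : (EuclideanSpace ℝ (Fin N) × EuclideanSpace ℝ (Fin N)) × (EuclideanSpace ℝ (Fin N) × EuclideanSpace ℝ (Fin N)), g z.1 z.2 ∂(ρ.prod ρ) = ∫ ω, ‖Y ω - Y' ω‖ ∂μ := by
    rw [← L2]
    exact integral_map (hm0.prodMk hm1).aemeasurable
      (mg.aestronglyMeasurable)
  have e3 : ∫ w : (EuclideanSpace ℝ (Fin N) × EuclideanSpace ℝ (Fin N)) × ((EuclideanSpace ℝ (Fin N) × EuclideanSpace ℝ (Fin N)) × (EuclideanSpace ℝ (Fin N) × EuclideanSpace ℝ (Fin N))), f w.1 w.2.1 * g w.1 w.2.2 ∂(ρ.prod (ρ.prod ρ))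
      = ∫ ω, ‖X ω - X' ω‖ * ‖Y ω - Y'' ω‖ ∂μ := by
    rw [← L3]
    exact integral_map (hm0.prodMk (hm1.prodMk hm2)).aemeasurable
      (m3.aestronglyMeasurable)
  have e4 : ∫ w : (EuclideanSpace ℝ (Fin N) × EuclideanSpace ℝ (Fin N)) × ((EuclideanSpace ℝ (Fin N) × EuclideanSpace ℝ (Fin N)) × (EuclideanSpace ℝ (Fin N) × EuclideanSpace ℝ (Fin N))), f w.1 w.2.2 * g w.1 w.2.1 ∂(ρ.prod (ρ.prod ρ))
      = ∫ ω, ‖X ω - X'' ω‖ * ‖Y ω - Y' ω‖ ∂μ := by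
    rw [← L3]
    exact integral_map (hm0.prodMk (hm1.prodMk hm2)).aemeasurable
      (m4.aestronglyMeasurable)
  -- full measure on the triple product
  have hSS : ∀ᵐ v ∂ρ.prod ρ, v ∈ S ×ˢ S :=
    (dc_prodS hSm hS).mono fun v hv => Set.mem_prod.2 ⟨hv.1, hv.2⟩
  have h3S : ∀ᵐ w ∂ρ.prod (ρ.prod ρ), w.1 ∈ S ∧ w.2.1 ∈ S ∧ w.2.2 ∈ S := by
    have h := dc_prodS2 hSm (hSm.prod hSm) hS hSS
    exact h.mono fun w hw => ⟨hw.1, hw.2.1, hw.2.2⟩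
  -- reduce the two triple integrals
  have t3 : ∫ w : (EuclideanSpace ℝ (Fin N) × EuclideanSpace ℝ (Fin N)) × ((EuclideanSpace ℝ (Fin N) × EuclideanSpace ℝ (Fin N)) × (EuclideanSpace ℝ (Fin N) × EuclideanSpace ℝ (Fin N))), f w.1 w.2.1 * g w.1 w.2.2 ∂(ρ.prod (ρ.prod ρ))
      = ∫ p, (∫ q, f p q ∂ρ) * (∫ q, g p q ∂ρ) ∂ρ := by
    have iH : Integrable (fun w : (EuclideanSpace ℝ (Fin N) × EuclideanSpace ℝ (Fin N)) × ((EuclideanSpace ℝ (Fin N) × EuclideanSpace ℝ (Fin N)) × (EuclideanSpace ℝ (Fin N) × EuclideanSpace ℝ (Fin N))) => f w.1 w.2.1 * g w.1 w.2.2)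
        (ρ.prod (ρ.prod ρ)) := by
      have hsm : AEStronglyMeasurable (fun w : (EuclideanSpace ℝ (Fin N) × EuclideanSpace ℝ (Fin N)) × ((EuclideanSpace ℝ (Fin N) × EuclideanSpace ℝ (Fin N)) × (EuclideanSpace ℝ (Fin N) × EuclideanSpace ℝ (Fin N))) => f w.1 w.2.1 * g w.1 w.2.2)
          (ρ.prod (ρ.prod ρ)) := m3.aestronglyMeasurable
      apply dc_int_of_bound hsm (C := Real.sqrt N * Real.sqrt N)
      filter_upwards [h3S] with w hw
      rw [abs_of_nonneg (mul_nonneg (hf0 _ _) (hg0 _ _))]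
      exact mul_le_mul (hfb _ hw.1 _ hw.2.1) (hgb _ hw.1 _ hw.2.2) (hg0 _ _)
        (Real.sqrt_nonneg _)
    have h1 : ∫ w : (EuclideanSpace ℝ (Fin N) × EuclideanSpace ℝ (Fin N)) × ((EuclideanSpace ℝ (Fin N) × EuclideanSpace ℝ (Fin N)) × (EuclideanSpace ℝ (Fin N) × EuclideanSpace ℝ (Fin N))), f w.1 w.2.1 * g w.1 w.2.2 ∂(ρ.prod (ρ.prod ρ))
        = ∫ p, ∫ v : (EuclideanSpace ℝ (Fin N) × EuclideanSpace ℝ (Fin N)) × (EuclideanSpace ℝ (Fin N) × EuclideanSpace ℝ (Fin N)), f p v.1 * g p v.2 ∂(ρ.prod ρ) ∂ρ := integral_prod _ iH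
    rw [h1]
    apply integral_congr_ae
    apply Filter.Eventually.of_forall
    intro p
    exact integral_prod_mul (f p) (g p)
  have t4 : ∫ w : (EuclideanSpace ℝ (Fin N) × EuclideanSpace ℝ (Fin N)) × ((EuclideanSpace ℝ (Fin N) × EuclideanSpace ℝ (Fin N)) × (EuclideanSpace ℝ (Fin N) × EuclideanSpace ℝ (Fin N))), f w.1 w.2.2 * g w.1 w.2.1 ∂(ρ.prod (ρ.prod ρ))
      = ∫ p, (∫ q, f p q ∂ρ) * (∫ q, g p q ∂ρ) ∂ρ := by
    have iH : Integrable (fun w : (EuclideanSpace ℝ (Fin N) × EuclideanSpace ℝ (Fin N)) × ((EuclideanSpace ℝ (Fin N) × EuclideanSpace ℝ (Fin N)) × (EuclideanSpace ℝ (Fin N) × EuclideanSpace ℝ (Fin N))) => f w.1 w.2.2 * g w.1 w.2.1)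
        (ρ.prod (ρ.prod ρ)) := by
      have hsm : AEStronglyMeasurable (fun w : (EuclideanSpace ℝ (Fin N) × EuclideanSpace ℝ (Fin N)) × ((EuclideanSpace ℝ (Fin N) × EuclideanSpace ℝ (Fin N)) × (EuclideanSpace ℝ (Fin N) × EuclideanSpace ℝ (Fin N))) => f w.1 w.2.2 * g w.1 w.2.1)
          (ρ.prod (ρ.prod ρ)) := m4.aestronglyMeasurable
      apply dc_int_of_bound hsm (C := Real.sqrt N * Real.sqrt N)
      filter_upwards [h3S] with w hw
      rw [abs_of_nonneg (mul_nonneg (hf0 _ _) (hg0 _ _))]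
      exact mul_le_mul (hfb _ hw.1 _ hw.2.2) (hgb _ hw.1 _ hw.2.1) (hg0 _ _)
        (Real.sqrt_nonneg _)
    have h1 : ∫ w : (EuclideanSpace ℝ (Fin N) × EuclideanSpace ℝ (Fin N)) × ((EuclideanSpace ℝ (Fin N) × EuclideanSpace ℝ (Fin N)) × (EuclideanSpace ℝ (Fin N) × EuclideanSpace ℝ (Fin N))), f w.1 w.2.2 * g w.1 w.2.1 ∂(ρ.prod (ρ.prod ρ))
        = ∫ p, ∫ v : (EuclideanSpace ℝ (Fin N) × EuclideanSpace ℝ (Fin N)) × (EuclideanSpace ℝ (Fin N) × EuclideanSpace ℝ (Fin N)), g p v.1 * f p v.2 ∂(ρ.prod ρ) ∂ρ := by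
      have := integral_prod (fun w : (EuclideanSpace ℝ (Fin N) × EuclideanSpace ℝ (Fin N)) × ((EuclideanSpace ℝ (Fin N) × EuclideanSpace ℝ (Fin N)) × (EuclideanSpace ℝ (Fin N) × EuclideanSpace ℝ (Fin N))) => f w.1 w.2.2 * g w.1 w.2.1) iH
      rw [this]
      apply integral_congr_ae
      apply Filter.Eventually.of_forall
      intro p
      apply integral_congr_ae
      apply Filter.Eventually.of_forall
      intro v
      show f p v.2 * g p v.1 = g p v.1 * f p v.2
      ring
    rw [h1]
    apply integral_congr_ae
    apply Filter.Eventually.of_forall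
    intro p
    exact (integral_prod_mul (g p) (f p)).trans (mul_comm _ _)
  -- main bound
  have core := dc_core f g S (Real.sqrt N) hfm hgm hfs hgs hf0 hg0 hSm hS hfb hgb
  rw [Real.sq_sqrt (Nat.cast_nonneg N)] at core
  have key : (∫ ω, ‖X ω - X' ω‖ * ‖Y ω - Y' ω‖ ∂μ)
      + (∫ ω, ‖X ω - X' ω‖ ∂μ) * (∫ ω, ‖Y ω - Y' ω‖ ∂μ)
      - (∫ ω, ‖X ω - X' ω‖ * ‖Y ω - Y'' ω‖ ∂μ)
      - (∫ ω, ‖X ω - X'' ω‖ * ‖Y ω - Y' ω‖ ∂μ) ≤ (N : ℝ) / 4 := by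
    rw [← e1, ← e2a, ← e2b, ← e3, ← e4, t3, t4]
    linarith [core]
  refine ⟨?_, key⟩
  have h4 : Real.sqrt ((N : ℝ) / 4) = Real.sqrt N / 2 := by
    have h42 : Real.sqrt 4 = 2 := by
      rw [show (4:ℝ) = 2^2 by norm_num, Real.sqrt_sq (by norm_num : (0:ℝ) ≤ 2)]
    rw [Real.sqrt_div (Nat.cast_nonneg N) 4, h42]
  calc Real.sqrt _ ≤ Real.sqrt ((N : ℝ) / 4) := Real.sqrt_le_sqrt key
    _ = Real.sqrt N / 2 := h4
end
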